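/- arXiv:2205.00577 — 3 statements merged into one kernel-verified Lean document; each statement's English description precedes it below -/
import Mathlib

section
/- (Lemma B.2, part 3.) Under Assumption 1, there exists a constant C such that for every T ≥ 1 the third moment of the normalized partial sum satisfies |E[S_T³]| ≤ C·T^{−1/2}. -/
open MeasureTheory ProbabilityTheory Filter
open scoped ENNReal NNReal Topology Classical

namespace PanelPaper

/-- The physical-dependence framework: innovations `eps`, an independent copy `eps'`,
and a measurable functional `G` generating the process `Ū_t = G(ε_t, ε_{t-1}, …)`. -/
structure PhysDep {Ω : Type*} [MeasurableSpace Ω] (μ : Measure Ω)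
    (E : Type*) [MeasurableSpace E] where
  eps : ℤ → Ω → E
  eps' : ℤ → Ω → E
  meas_eps : ∀ t, Measurable (eps t)
  meas_eps' : ∀ t, Measurable (eps' t)
  indep : iIndepFun (Sum.elim eps eps') μ
  ident : ∀ i j : ℤ ⊕ ℤ, IdentDistrib (Sum.elim eps eps' i) (Sum.elim eps eps' j) μ μ
  G : (ℕ → E) → ℝ
  meas_G : Measurable G

variable {Ω : Type*} [MeasurableSpace Ω] {μ : Measure Ω}
variable {E : Type*} [MeasurableSpace E]

/-- `Ū_t(ω) = G(n ↦ ε_{t-n}(ω))`. -/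
noncomputable def PhysDep.U (P : PhysDep μ E) (t : ℤ) : Ω → ℝ :=
  fun ω => P.G fun n => P.eps (t - n) ω

/-- The coupled version `Ū*_t`, with `ε_s` replaced by `ε'_s` for `s ≤ 0`. -/
noncomputable def PhysDep.Ustar (P : PhysDep μ E) (t : ℤ) : Ω → ℝ :=
  fun ω => P.G fun n =>
    if 1 ≤ t - (n : ℤ) then P.eps (t - n) ω else P.eps' (t - n) ω

/-- The physical-dependence coefficient `λ_{t,r} = ‖Ū_t − Ū*_t‖_{L^r}` (in `ℝ≥0∞`). -/
noncomputable def PhysDep.lam (P : PhysDep μ E) (t : ℤ) (r : ℝ) : ℝ≥0∞ :=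
  eLpNorm (P.U t - P.Ustar t) (ENNReal.ofReal r) μ

/-- Normalized partial sum `S_T = T^{-1/2} ∑_{t=1}^T Ū_t`. -/
noncomputable def PhysDep.S (P : PhysDep μ E) (T : ℕ) : Ω → ℝ :=
  fun ω => (∑ t ∈ Finset.Icc (1 : ℤ) (T : ℤ), P.U t ω) / Real.sqrt T

/-- Assumption 1: `δ ≥ 4`, centred process in `L^δ`, and `∑ t² λ_{t,δ} < ∞`. -/
structure Assumption1 (P : PhysDep μ E) (δ : ℝ) : Prop where
  hδ : 4 ≤ δ
  mean_zero : ∀ t : ℤ, ∫ ω, P.U t ω ∂μ = 0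
  memLp : ∀ t : ℤ, MemLp (P.U t) (ENNReal.ofReal δ) μ
  memLp_star : ∀ t : ℤ, MemLp (P.Ustar t) (ENNReal.ofReal δ) μ
  summable : ∑' t : ℕ, ((t : ℝ≥0∞)) ^ 2 * P.lam t δ ≠ ∞

/-! ### Auxiliary framework -/

section Aux

variable (P : PhysDep μ E)

/-- The combined family of innovations. -/
noncomputable def PhysDep.Z (i : ℤ ⊕ ℤ) : Ω → E := Sum.elim P.eps P.eps' i

lemma PhysDep.measurable_Z (i : ℤ ⊕ ℤ) : Measurable (P.Z i) := by
  cases i with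
  | inl k => exact P.meas_eps k
  | inr k => exact P.meas_eps' k

/-- The map to the full sequence of innovations. -/
noncomputable def PhysDep.Phi : Ω → (ℤ ⊕ ℤ → E) := fun ω i => P.Z i ω

lemma PhysDep.measurable_Phi : Measurable P.Phi :=
  measurable_pi_lambda _ P.measurable_Z

/-- Reindexing by an injection leaves the joint law invariant. -/
lemma PhysDep.map_reindex (f : ℤ ⊕ ℤ → ℤ ⊕ ℤ) (hf : Function.Injective f)
    [IsProbabilityMeasure μ] :
    μ.map (fun ω i => P.Phi ω (f i)) = μ.map P.Phi := by
  classical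
  have hmf : Measurable (fun ω i => P.Phi ω (f i)) :=
    measurable_pi_lambda _ fun i => P.measurable_Z (f i)
  have identZ : ∀ i j : ℤ ⊕ ℤ, μ.map (P.Z i) = μ.map (P.Z j) := fun i j => (P.ident i j).map_eq
  have key : ∀ (g : ℤ ⊕ ℤ → ℤ ⊕ ℤ), Function.Injective g → ∀ (s : Finset (ℤ ⊕ ℤ))
      (t : (ℤ ⊕ ℤ) → Set E), (∀ i, MeasurableSet (t i)) →
      μ ((fun ω i => P.Phi ω (g i)) ⁻¹' (s : Set (ℤ ⊕ ℤ)).pi t)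
        = ∏ i ∈ s, (μ.map (P.Z i)) (t i) := by
    intro g hg s t ht
    have hpre : (fun ω i => P.Phi ω (g i)) ⁻¹' (s : Set (ℤ ⊕ ℤ)).pi t
        = ⋂ i ∈ s, P.Z (g i) ⁻¹' t i := by
      ext ω
      simp [Set.mem_pi, PhysDep.Phi]
    set sets : (ℤ ⊕ ℤ) → Set E := fun j =>
      if h : ∃ i ∈ s, g i = j then t h.choose else Set.univ with hsets
    have hsets_meas : ∀ j, MeasurableSet (sets j) := by
      intro j
      rw [hsets]
      dsimp only
      split_ifs with h
      · exact ht _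
      · exact MeasurableSet.univ
    have hsets_eq : ∀ i ∈ s, sets (g i) = t i := by
      intro i hi
      have hex : ∃ i' ∈ s, g i' = g i := ⟨i, hi, rfl⟩
      rw [hsets]
      dsimp only
      rw [dif_pos hex]
      exact congrArg t (hg hex.choose_spec.2)
    have hinter : (⋂ i ∈ s, P.Z (g i) ⁻¹' t i) = ⋂ j ∈ s.image g, P.Z j ⁻¹' sets j := by
      ext ω
      simp only [Set.mem_iInter, Finset.mem_image, Set.mem_preimage]
      constructor
      · rintro h j ⟨i, hi, rfl⟩
        rw [hsets_eq i hi]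
        exact h i hi
      · intro h i hi
        have h2 := h (g i) ⟨i, hi, rfl⟩
        rwa [hsets_eq i hi] at h2
    have hind : μ (⋂ j ∈ s.image g, P.Z j ⁻¹' sets j)
        = ∏ j ∈ s.image g, μ (P.Z j ⁻¹' sets j) :=
      (iIndepFun_iff_measure_inter_preimage_eq_mul.mp P.indep) (s.image g)
        (sets := sets) (fun j _ => hsets_meas j)
    rw [hpre, hinter, hind, Finset.prod_image (fun i _ j _ hij => hg hij)]
    refine Finset.prod_congr rfl fun i hi => ?_
    rw [hsets_eq i hi, ← Measure.map_apply (P.measurable_Z (g i)) (ht i), identZ (g i) i]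
  haveI hPM : IsProbabilityMeasure (μ.map (fun ω i => P.Phi ω (f i))) :=
    Measure.isProbabilityMeasure_map hmf.aemeasurable
  haveI hPM' : IsProbabilityMeasure (μ.map P.Phi) :=
    Measure.isProbabilityMeasure_map P.measurable_Phi.aemeasurable
  refine ext_of_generate_finite
    (squareCylinders fun _ : ℤ ⊕ ℤ => {s : Set E | MeasurableSet s})
    generateFrom_squareCylinders.symm
    (isPiSystem_squareCylinders (fun _ => MeasurableSpace.isPiSystem_measurableSet) (fun _ => MeasurableSet.univ))
    ?_ ?_
  · rintro S ⟨s, t, htmem, rfl⟩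
    have ht : ∀ i, MeasurableSet (t i) := fun i => htmem i (Set.mem_univ i)
    have hSmeas : MeasurableSet ((s : Set (ℤ ⊕ ℤ)).pi t) :=
      MeasurableSet.pi s.countable_toSet (fun i _ => ht i)
    rw [Measure.map_apply hmf hSmeas, Measure.map_apply P.measurable_Phi hSmeas,
      key f hf s t ht]
    have h2 := key id Function.injective_id s t ht
    simp only [id] at h2
    exact h2.symm
  · simp

/-- Composition of a measurable functional with a reindexed innovation family is identically
distributed with the unreindexed version. -/
lemma PhysDep.identDistrib_reindex [IsProbabilityMeasure μ] {β : Type*} [MeasurableSpace β]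
    (f : ℤ ⊕ ℤ → ℤ ⊕ ℤ) (hf : Function.Injective f) {ψ : (ℤ ⊕ ℤ → E) → β}
    (hψ : Measurable ψ) :
    IdentDistrib (fun ω => ψ (fun i => P.Phi ω (f i))) (fun ω => ψ (P.Phi ω)) μ μ := by
  have hmf : Measurable (fun ω i => P.Phi ω (f i)) :=
    measurable_pi_lambda _ fun i => P.measurable_Z (f i)
  refine ⟨(hψ.comp hmf).aemeasurable, (hψ.comp P.measurable_Phi).aemeasurable, ?_⟩
  have h1 : μ.map (ψ ∘ fun ω i => P.Phi ω (f i)) = μ.map (ψ ∘ P.Phi) := by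
    rw [← Measure.map_map hψ hmf, ← Measure.map_map hψ P.measurable_Phi, P.map_reindex f hf]
  simpa only [Function.comp_def] using h1

/-- The functional generating `U t`. -/
noncomputable def PhysDep.phiU (t : ℤ) : (ℤ ⊕ ℤ → E) → ℝ :=
  fun x => P.G fun n => x (Sum.inl (t - n))

/-- The functional generating the coupled process with threshold `m`. -/
noncomputable def PhysDep.phiW (t m : ℤ) : (ℤ ⊕ ℤ → E) → ℝ :=
  fun x => P.G fun n =>
    if m + 1 ≤ t - (n : ℤ) then x (Sum.inl (t - n)) else x (Sum.inr (t - n))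

/-- The coupled process with general threshold `m`. -/
noncomputable def PhysDep.W (t m : ℤ) : Ω → ℝ := fun ω => P.phiW t m (P.Phi ω)

lemma PhysDep.measurable_phiU (t : ℤ) : Measurable (P.phiU t) :=
  P.meas_G.comp (measurable_pi_lambda _ fun n => measurable_pi_apply _)

lemma PhysDep.measurable_phiW (t m : ℤ) : Measurable (P.phiW t m) := by
  refine P.meas_G.comp (measurable_pi_lambda _ fun n => ?_)
  split_ifs <;> exact measurable_pi_apply _

lemma PhysDep.U_eq_phiU (t : ℤ) : P.U t = fun ω => P.phiU t (P.Phi ω) := rfl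

lemma PhysDep.Ustar_eq_W (t : ℤ) : P.Ustar t = P.W t 0 := by
  funext ω
  simp only [PhysDep.Ustar, PhysDep.W, PhysDep.phiW, PhysDep.Phi, PhysDep.Z, zero_add,
    Sum.elim_inl, Sum.elim_inr]

/-- The two-sided shift. -/
def shiftI (h : ℤ) : ℤ ⊕ ℤ → ℤ ⊕ ℤ := Sum.map (· + h) (· + h)

lemma shiftI_injective (h : ℤ) : Function.Injective (shiftI h) :=
  Function.Injective.sumMap (fun a b => by omega) (fun a b => by omega)

lemma PhysDep.phiU_shift (t h : ℤ) (x : ℤ ⊕ ℤ → E) :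
    P.phiU t (fun i => x (shiftI h i)) = P.phiU (t + h) x := by
  unfold PhysDep.phiU shiftI
  congr 1
  funext n
  simp only [Sum.map_inl]
  congr 2
  ring

lemma PhysDep.phiW_shift (t m h : ℤ) (x : ℤ ⊕ ℤ → E) :
    P.phiW t m (fun i => x (shiftI h i)) = P.phiW (t + h) (m + h) x := by
  unfold PhysDep.phiW shiftI
  congr 1
  funext n
  have hc : (m + 1 ≤ t - (n : ℤ)) = (m + h + 1 ≤ t + h - (n : ℤ)) := propext (by omega)
  have h1 : t - (n : ℤ) + h = t + h - n := by ring
  simp only [Sum.map_inl, Sum.map_inr, h1, hc]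

/-- The involution swapping `eps` and `eps'` on indices `≤ 0`. -/
def swapI : ℤ ⊕ ℤ → ℤ ⊕ ℤ
  | Sum.inl k => if 1 ≤ k then Sum.inl k else Sum.inr k
  | Sum.inr k => if 1 ≤ k then Sum.inr k else Sum.inl k

lemma swapI_injective : Function.Injective swapI := by
  have : Function.Involutive swapI := by
    rintro (k | k) <;> simp only [swapI] <;> split_ifs with h <;> simp [swapI, h]
  exact this.injective

lemma PhysDep.phiU_swap (t : ℤ) (x : ℤ ⊕ ℤ → E) :
    P.phiU t (fun i => x (swapI i)) = P.phiW t 0 x := by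
  unfold PhysDep.phiU PhysDep.phiW
  congr 1
  funext n
  rw [zero_add]
  simp only [swapI, apply_ite x]

section Probability

variable [IsProbabilityMeasure μ]

lemma PhysDep.identDistrib_U (t t' : ℤ) : IdentDistrib (P.U t) (P.U t') μ μ := by
  have h := P.identDistrib_reindex (shiftI (t - t')) (shiftI_injective _) (P.measurable_phiU t')
  have e : (fun ω => P.phiU t' (fun i => P.Phi ω (shiftI (t - t') i))) = P.U t := by
    funext ω
    rw [P.phiU_shift]
    rw [show t' + (t - t') = t by ring]
    rfl
  rw [e] at h
  exact h

lemma PhysDep.identDistrib_Ustar (t : ℤ) : IdentDistrib (P.Ustar t) (P.U t) μ μ := by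
  have h := P.identDistrib_reindex swapI swapI_injective (P.measurable_phiU t)
  have e : (fun ω => P.phiU t (fun i => P.Phi ω (swapI i))) = P.Ustar t := by
    funext ω
    rw [P.phiU_swap]
    rw [P.Ustar_eq_W]
    rfl
  rw [e] at h
  exact h

lemma PhysDep.identDistrib_W (t s : ℤ) : IdentDistrib (P.W t s) (P.Ustar (t - s)) μ μ := by
  have h := P.identDistrib_reindex (shiftI s) (shiftI_injective _) (P.measurable_phiW (t - s) 0)
  have e : (fun ω => P.phiW (t - s) 0 (fun i => P.Phi ω (shiftI s i))) = P.W t s := by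
    funext ω
    rw [P.phiW_shift]
    rw [show t - s + s = t by ring, zero_add]
    rfl
  rw [e] at h
  rw [P.Ustar_eq_W]
  exact h

/-- coupling difference is distributed like the base coupling difference -/
lemma PhysDep.identDistrib_diff (t s : ℤ) :
    IdentDistrib (fun ω => P.U t ω - P.W t s ω)
      (fun ω => P.U (t - s) ω - P.Ustar (t - s) ω) μ μ := by
  have hψ : Measurable (fun x => P.phiU (t - s) x - P.phiW (t - s) 0 x) :=
    (P.measurable_phiU _).sub (P.measurable_phiW _ _)
  have h := P.identDistrib_reindex (shiftI s) (shiftI_injective _) hψ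
  have e : (fun ω => P.phiU (t - s) (fun i => P.Phi ω (shiftI s i))
      - P.phiW (t - s) 0 (fun i => P.Phi ω (shiftI s i)))
      = fun ω => P.U t ω - P.W t s ω := by
    funext ω
    rw [P.phiU_shift, P.phiW_shift]
    rw [show t - s + s = t by ring, zero_add]
    rfl
  rw [e] at h
  have e' : (fun ω => P.phiU (t - s) (P.Phi ω) - P.phiW (t - s) 0 (P.Phi ω))
      = fun ω => P.U (t - s) ω - P.Ustar (t - s) ω := by
    funext ω
    rw [P.Ustar_eq_W]
    rfl
  rw [e'] at h
  exact h

end Probability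

/-! ### Independence structure -/

/-- σ-algebra generated by innovations with index in `s`. -/
noncomputable def PhysDep.sigmaOn (s : Set (ℤ ⊕ ℤ)) : MeasurableSpace Ω :=
  ⨆ i ∈ s, MeasurableSpace.comap (P.Z i) inferInstance

/-- the "past" index set -/
def leftIdx (m : ℤ) : Set (ℤ ⊕ ℤ) := Sum.inl '' Set.Iic m

/-- the "future plus primed" index set -/
def rightIdx (m : ℤ) : Set (ℤ ⊕ ℤ) := Sum.inl '' Set.Ici (m + 1) ∪ Set.range Sum.inr

lemma PhysDep.measurable_sigmaOn_Z {s : Set (ℤ ⊕ ℤ)} {i : ℤ ⊕ ℤ} (hi : i ∈ s) :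
    Measurable[P.sigmaOn s] (P.Z i) := by
  rw [measurable_iff_comap_le]
  exact le_biSup (fun i => MeasurableSpace.comap (P.Z i) inferInstance) hi

lemma PhysDep.measurable_left_U {t m : ℤ} (h : t ≤ m) :
    Measurable[P.sigmaOn (leftIdx m)] (P.U t) := by
  have hco : @Measurable Ω (ℕ → E) (P.sigmaOn (leftIdx m)) _ (fun ω n => P.eps (t - n) ω) := by
    refine @measurable_pi_lambda Ω ℕ (fun _ => E) (P.sigmaOn (leftIdx m)) _ _ fun n => ?_
    have hmem : Sum.inl (t - (n:ℤ)) ∈ leftIdx m := ⟨t - n, by simp only [Set.mem_Iic]; omega, rfl⟩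
    exact P.measurable_sigmaOn_Z hmem
  exact P.meas_G.comp hco

lemma PhysDep.measurable_right_W (t m : ℤ) :
    Measurable[P.sigmaOn (rightIdx m)] (P.W t m) := by
  have hco : @Measurable Ω (ℕ → E) (P.sigmaOn (rightIdx m)) _
      (fun ω n => if m + 1 ≤ t - (n : ℤ) then P.eps (t - n) ω else P.eps' (t - n) ω) := by
    refine @measurable_pi_lambda Ω ℕ (fun _ => E) (P.sigmaOn (rightIdx m)) _ _ fun n => ?_
    by_cases h : m + 1 ≤ t - (n : ℤ)
    · simp only [if_pos h]
      have hmem : Sum.inl (t - (n:ℤ)) ∈ rightIdx m :=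
        Or.inl ⟨t - n, by simp only [Set.mem_Ici]; omega, rfl⟩
      exact P.measurable_sigmaOn_Z hmem
    · simp only [if_neg h]
      have hmem : Sum.inr (t - (n:ℤ)) ∈ rightIdx m := Or.inr ⟨t - n, rfl⟩
      exact P.measurable_sigmaOn_Z hmem
  exact P.meas_G.comp hco

lemma PhysDep.indep_left_right (m : ℤ) :
    Indep (P.sigmaOn (leftIdx m)) (P.sigmaOn (rightIdx m)) μ := by
  refine indep_iSup_of_disjoint (fun i => (P.measurable_Z i).comap_le) P.indep ?_
  rw [Set.disjoint_left]
  rintro _ ⟨k, hk, rfl⟩ (⟨k', hk', h⟩ | ⟨k', h⟩)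
  · simp only [Sum.inl.injEq] at h
    subst h
    simp only [Set.mem_Iic] at hk
    simp only [Set.mem_Ici] at hk'
    omega
  · exact nomatch h

lemma PhysDep.indepFun_of_left_right {m : ℤ} {X Y : Ω → ℝ}
    (hX : Measurable[P.sigmaOn (leftIdx m)] X) (hY : Measurable[P.sigmaOn (rightIdx m)] Y) :
    IndepFun X Y μ := by
  rw [IndepFun_iff_Indep]
  refine indep_of_indep_of_le_left (indep_of_indep_of_le_right (P.indep_left_right m) ?_) ?_
  · exact hY.comap_le
  · exact hX.comap_le

end Aux

/-! ### Moment estimates -/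

section Moments

variable (P : PhysDep μ E) [IsProbabilityMeasure μ] {δ : ℝ}

/-- The 4th-moment bound constant. -/
noncomputable def PhysDep.M4 : ℝ≥0∞ := eLpNorm (P.U 0) 4 μ

/-- `Λ m` is the physical dependence coefficient at lag `m`. -/
noncomputable def PhysDep.lamN (δ : ℝ) (m : ℕ) : ℝ≥0∞ := P.lam (m : ℤ) δ

lemma PhysDep.memLp4 (hA : Assumption1 P δ) (t : ℤ) : MemLp (P.U t) 4 μ := by
  have h4 : (4 : ℝ≥0∞) ≤ ENNReal.ofReal δ := by
    calc (4 : ℝ≥0∞) = ENNReal.ofReal (4 : ℝ) := by norm_num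
    _ ≤ ENNReal.ofReal δ := ENNReal.ofReal_le_ofReal hA.hδ
  exact (hA.memLp t).mono_exponent h4

lemma PhysDep.eLpNorm4_eq (t : ℤ) : eLpNorm (P.U t) 4 μ = P.M4 :=
  (P.identDistrib_U t 0).eLpNorm_eq 4

lemma PhysDep.M4_ne_top (hA : Assumption1 P δ) : P.M4 ≠ ⊤ :=
  (P.memLp4 hA 0).2.ne

lemma PhysDep.lamN_ne_top (hA : Assumption1 P δ) (m : ℕ) : P.lamN δ m ≠ ⊤ := by
  have h1 : (1 : ℝ≥0∞) ≤ ENNReal.ofReal δ := by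
    calc (1 : ℝ≥0∞) = ENNReal.ofReal (1 : ℝ) := by norm_num
    _ ≤ ENNReal.ofReal δ := ENNReal.ofReal_le_ofReal (by linarith [hA.hδ])
  have := eLpNorm_sub_le (p := ENNReal.ofReal δ)
    (hA.memLp (m : ℤ)).1 (hA.memLp_star (m : ℤ)).1 h1
  exact ((this.trans_lt (ENNReal.add_lt_top.2 ⟨(hA.memLp _).2, (hA.memLp_star _).2⟩))).ne

lemma PhysDep.lamN_coe {k : ℤ} (hk : 0 ≤ k) : P.lamN δ k.toNat = P.lam k δ := by
  unfold PhysDep.lamN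
  rw [Int.toNat_of_nonneg hk]

/-- helper: products of `L⁴` functions are in `L²`. -/
lemma memLp2_mul {f g : Ω → ℝ} (hf : MemLp f 4 μ) (hg : MemLp g 4 μ) :
    MemLp (fun ω => f ω * g ω) 2 μ := by
  have hexp : (1:ℝ≥0∞)/2 = 1/4 + 1/4 := by
    have h4 : (1:ℝ≥0∞)/4 ≠ ⊤ := (ENNReal.div_lt_top (by norm_num) (by norm_num)).ne
    refine (ENNReal.toReal_eq_toReal_iff' ((ENNReal.div_lt_top (by norm_num) (by norm_num)).ne)
      (ENNReal.add_ne_top.2 ⟨h4, h4⟩)).mp ?_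
    rw [ENNReal.toReal_add h4 h4]
    simp [ENNReal.toReal_div]
    norm_num
  haveI : ENNReal.HolderTriple 4 4 2 := ⟨by simpa only [one_div] using hexp.symm⟩
  have hb := eLpNorm_smul_le_mul_eLpNorm (μ := μ) (p := 4) (q := 4) (r := 2)
    hg.1 hf.1
  refine ⟨hf.1.mul hg.1, ?_⟩
  refine lt_of_le_of_lt ?_ (ENNReal.mul_lt_top hf.2 hg.2)
  exact hb

/-- helper: products of `L²` functions are integrable. -/
lemma integrable_mul2 {f g : Ω → ℝ} (hf : MemLp f 2 μ) (hg : MemLp g 2 μ) :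
    Integrable (fun ω => f ω * g ω) μ := by
  have hexp : (1:ℝ≥0∞)/1 = 1/2 + 1/2 := by
    have h4 : (1:ℝ≥0∞)/2 ≠ ⊤ := (ENNReal.div_lt_top (by norm_num) (by norm_num)).ne
    refine (ENNReal.toReal_eq_toReal_iff' ((ENNReal.div_lt_top (by norm_num) (by norm_num)).ne)
      (ENNReal.add_ne_top.2 ⟨h4, h4⟩)).mp ?_
    rw [ENNReal.toReal_add h4 h4]
    simp [ENNReal.toReal_div]
    norm_num
  haveI : ENNReal.HolderTriple 2 2 1 := ⟨by simpa only [one_div] using hexp.symm⟩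
  have hb := eLpNorm_smul_le_mul_eLpNorm (μ := μ) (p := 2) (q := 2) (r := 1)
    hg.1 hf.1
  rw [← memLp_one_iff_integrable]
  refine ⟨hf.1.mul hg.1, ?_⟩
  refine lt_of_le_of_lt ?_ (ENNReal.mul_lt_top hf.2 hg.2)
  exact hb

/-- Cauchy–Schwarz for the integral of a product. -/
lemma abs_integral_mul_le {f g : Ω → ℝ} (hf : MemLp f 2 μ) (hg : MemLp g 2 μ) :
    |∫ ω, f ω * g ω ∂μ| ≤ (eLpNorm f 2 μ * eLpNorm g 2 μ).toReal := by
  have hexp : (1:ℝ≥0∞)/1 = 1/2 + 1/2 := by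
    have h4 : (1:ℝ≥0∞)/2 ≠ ⊤ := (ENNReal.div_lt_top (by norm_num) (by norm_num)).ne
    refine (ENNReal.toReal_eq_toReal_iff' ((ENNReal.div_lt_top (by norm_num) (by norm_num)).ne)
      (ENNReal.add_ne_top.2 ⟨h4, h4⟩)).mp ?_
    rw [ENNReal.toReal_add h4 h4]
    simp [ENNReal.toReal_div]
    norm_num
  haveI : ENNReal.HolderTriple 2 2 1 := ⟨by simpa only [one_div] using hexp.symm⟩
  have hb := eLpNorm_smul_le_mul_eLpNorm (μ := μ) (p := 2) (q := 2) (r := 1)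
    hg.1 hf.1
  have hb' : eLpNorm (fun ω => f ω * g ω) 1 μ ≤ eLpNorm f 2 μ * eLpNorm g 2 μ := by
    exact hb
  calc |∫ ω, f ω * g ω ∂μ| = ‖∫ ω, f ω * g ω ∂μ‖ := (Real.norm_eq_abs _).symm
    _ ≤ ∫ ω, ‖f ω * g ω‖ ∂μ := norm_integral_le_integral_norm _
    _ = (∫⁻ ω, ‖f ω * g ω‖ₑ ∂μ).toReal := integral_norm_eq_lintegral_enorm (hf.1.mul hg.1)
    _ = (eLpNorm (fun ω => f ω * g ω) 1 μ).toReal := by rw [eLpNorm_one_eq_lintegral_enorm]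
    _ ≤ (eLpNorm f 2 μ * eLpNorm g 2 μ).toReal :=
      ENNReal.toReal_mono (ENNReal.mul_ne_top hf.2.ne hg.2.ne) hb' 

/-! ### IdentDistrib consequences for `W` -/

lemma PhysDep.identDistrib_W_U0 (t m : ℤ) : IdentDistrib (P.W t m) (P.U 0) μ μ :=
  ((P.identDistrib_W t m).trans (P.identDistrib_Ustar (t - m))).trans
    (P.identDistrib_U (t - m) 0)

lemma PhysDep.memLpW (hA : Assumption1 P δ) (t m : ℤ) : MemLp (P.W t m) 4 μ :=
  (P.identDistrib_W_U0 t m).symm.memLp_snd (P.memLp4 hA 0)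

lemma PhysDep.eLpNormW4 (t m : ℤ) : eLpNorm (P.W t m) 4 μ = P.M4 :=
  (P.identDistrib_W_U0 t m).eLpNorm_eq 4

lemma PhysDep.integral_W (hA : Assumption1 P δ) (t m : ℤ) : ∫ ω, P.W t m ω ∂μ = 0 := by
  rw [((P.identDistrib_W t m).trans (P.identDistrib_Ustar (t - m))).integral_eq]
  exact hA.mean_zero _

lemma PhysDep.memLp_diff (hA : Assumption1 P δ) (t s : ℤ) :
    MemLp (fun ω => P.U t ω - P.W t s ω) 4 μ :=
  (P.memLp4 hA t).sub (P.memLpW hA t s)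

lemma PhysDep.eLpNorm2_diff_le (hA : Assumption1 P δ) (t s : ℤ) :
    eLpNorm (fun ω => P.U t ω - P.W t s ω) 2 μ ≤ P.lam (t - s) δ := by
  have h2δ : (2 : ℝ≥0∞) ≤ ENNReal.ofReal δ := by
    calc (2 : ℝ≥0∞) = ENNReal.ofReal (2 : ℝ) := by norm_num
    _ ≤ ENNReal.ofReal δ := ENNReal.ofReal_le_ofReal (by linarith [hA.hδ])
  calc eLpNorm (fun ω => P.U t ω - P.W t s ω) 2 μ
      ≤ eLpNorm (fun ω => P.U t ω - P.W t s ω) (ENNReal.ofReal δ) μ :=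
        eLpNorm_le_eLpNorm_of_exponent_le h2δ
          (((P.memLp4 hA t).sub (P.memLpW hA t s)).1)
    _ = eLpNorm (fun ω => P.U (t - s) ω - P.Ustar (t - s) ω) (ENNReal.ofReal δ) μ :=
        (P.identDistrib_diff t s).eLpNorm_eq _
    _ = P.lam (t - s) δ := rfl

/-- Hölder: `L⁴ × L⁴ → L²` at the level of seminorms. -/
lemma eLpNorm2_mul_le {f g : Ω → ℝ} (hf : AEStronglyMeasurable f μ)
    (hg : AEStronglyMeasurable g μ) :
    eLpNorm (fun ω => f ω * g ω) 2 μ ≤ eLpNorm f 4 μ * eLpNorm g 4 μ := by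
  have hexp : (1:ℝ≥0∞)/2 = 1/4 + 1/4 := by
    have h4 : (1:ℝ≥0∞)/4 ≠ ⊤ := (ENNReal.div_lt_top (by norm_num) (by norm_num)).ne
    refine (ENNReal.toReal_eq_toReal_iff' ((ENNReal.div_lt_top (by norm_num) (by norm_num)).ne)
      (ENNReal.add_ne_top.2 ⟨h4, h4⟩)).mp ?_
    rw [ENNReal.toReal_add h4 h4]
    simp [ENNReal.toReal_div]
    norm_num
  haveI : ENNReal.HolderTriple 4 4 2 := ⟨by simpa only [one_div] using hexp.symm⟩
  have hb := eLpNorm_smul_le_mul_eLpNorm (μ := μ) (p := 4) (q := 4) (r := 2) hg hf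
  exact hb

/-! ### Vanishing cross terms -/

lemma PhysDep.integral_mul_W_right (hA : Assumption1 P δ) {t s m : ℤ} (r : ℤ)
    (ht : t ≤ m) (hs : s ≤ m) :
    ∫ ω, P.U t ω * P.U s ω * P.W r m ω ∂μ = 0 := by
  have hind : IndepFun (fun ω => P.U t ω * P.U s ω) (P.W r m) μ :=
    P.indepFun_of_left_right
      ((P.measurable_left_U ht).mul (P.measurable_left_U hs)) (P.measurable_right_W r m)
  have hres := hind.integral_fun_mul_eq_mul_integral
    ((P.memLp4 hA t).1.mul (P.memLp4 hA s).1) (P.memLpW hA r m).1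
  calc ∫ ω, P.U t ω * P.U s ω * P.W r m ω ∂μ
      = (∫ ω, P.U t ω * P.U s ω ∂μ) * ∫ ω, P.W r m ω ∂μ := hres
    _ = 0 := by rw [P.integral_W hA]; ring

lemma PhysDep.integral_U_mul_WW (hA : Assumption1 P δ) (t s r : ℤ) :
    ∫ ω, P.U t ω * (P.W s t ω * P.W r t ω) ∂μ = 0 := by
  have hind : IndepFun (P.U t) (fun ω => P.W s t ω * P.W r t ω) μ :=
    P.indepFun_of_left_right (P.measurable_left_U le_rfl)
      ((P.measurable_right_W s t).mul (P.measurable_right_W r t))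
  have hres := hind.integral_fun_mul_eq_mul_integral (P.memLp4 hA t).1
    ((P.memLpW hA s t).1.mul (P.memLpW hA r t).1)
  calc ∫ ω, P.U t ω * (P.W s t ω * P.W r t ω) ∂μ
      = (∫ ω, P.U t ω ∂μ) * ∫ ω, P.W s t ω * P.W r t ω ∂μ := hres
    _ = 0 := by rw [hA.mean_zero]; ring

/-! ### The per-triple bound -/

lemma PhysDep.triple_bound (hA : Assumption1 P δ) {t s r : ℤ} (hts : t ≤ s) (hsr : s ≤ r) :
    |∫ ω, P.U t ω * P.U s ω * P.U r ω ∂μ| ≤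
      (P.M4 ^ 2 * (P.lamN δ ((s - t).toNat ⊔ (r - s).toNat)
        + P.lamN δ ((s - t).toNat + (r - s).toNat))).toReal := by
  have hM4 := P.M4_ne_top hA
  have hRHS_ne : P.M4 ^ 2 * (P.lamN δ ((s - t).toNat ⊔ (r - s).toNat)
      + P.lamN δ ((s - t).toNat + (r - s).toNat)) ≠ ⊤ :=
    ENNReal.mul_ne_top (ENNReal.pow_ne_top hM4)
      (ENNReal.add_ne_top.2 ⟨P.lamN_ne_top hA _, P.lamN_ne_top hA _⟩)
  have hmemUtUs : MemLp (fun ω => P.U t ω * P.U s ω) 2 μ :=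
    memLp2_mul (P.memLp4 hA t) (P.memLp4 hA s)
  have hUtUs_le : eLpNorm (fun ω => P.U t ω * P.U s ω) 2 μ ≤ P.M4 ^ 2 := by
    calc eLpNorm (fun ω => P.U t ω * P.U s ω) 2 μ
        ≤ eLpNorm (P.U t) 4 μ * eLpNorm (P.U s) 4 μ :=
          eLpNorm2_mul_le (P.memLp4 hA t).1 (P.memLp4 hA s).1
      _ = P.M4 ^ 2 := by rw [P.eLpNorm4_eq, P.eLpNorm4_eq, sq]
  rcases le_total (s - t) (r - s) with hcase | hcase
  · -- the right gap is the largest : decouple `U r`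
    have hdiff2 : MemLp (fun ω => P.U r ω - P.W r s ω) 2 μ :=
      (P.memLp_diff hA r s).mono_exponent (by norm_num)
    have h1 : Integrable (fun ω => (P.U t ω * P.U s ω) * (P.U r ω - P.W r s ω)) μ :=
      integrable_mul2 hmemUtUs hdiff2
    have h2 : Integrable (fun ω => (P.U t ω * P.U s ω) * P.W r s ω) μ :=
      integrable_mul2 hmemUtUs ((P.memLpW hA r s).mono_exponent (by norm_num))
    have hsplit : (fun ω => P.U t ω * P.U s ω * P.U r ω)
        = fun ω => (P.U t ω * P.U s ω) * (P.U r ω - P.W r s ω)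
            + (P.U t ω * P.U s ω) * P.W r s ω := by
      funext ω; ring
    have hdecomp : ∫ ω, P.U t ω * P.U s ω * P.U r ω ∂μ
        = ∫ ω, (P.U t ω * P.U s ω) * (P.U r ω - P.W r s ω) ∂μ := by
      rw [hsplit, integral_add h1 h2, P.integral_mul_W_right hA r hts le_rfl, add_zero]
    rw [hdecomp]
    have hCS := abs_integral_mul_le hmemUtUs hdiff2
    refine hCS.trans (ENNReal.toReal_mono hRHS_ne ?_)
    have hlam : eLpNorm (fun ω => P.U r ω - P.W r s ω) 2 μ
        ≤ P.lamN δ ((s - t).toNat ⊔ (r - s).toNat)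
          + P.lamN δ ((s - t).toNat + (r - s).toNat) := by
      refine le_trans ?_ le_self_add
      have hsup : (s - t).toNat ⊔ (r - s).toNat = (r - s).toNat := by omega
      rw [hsup, P.lamN_coe (by omega : (0:ℤ) ≤ r - s)]
      exact P.eLpNorm2_diff_le hA r s
    exact mul_le_mul' hUtUs_le hlam
  · -- the left gap is the largest : decouple `U t`
    have hdiffr2 : MemLp (fun ω => P.U r ω - P.W r t ω) 2 μ :=
      (P.memLp_diff hA r t).mono_exponent (by norm_num)
    have hdiffs2 : MemLp (fun ω => P.U s ω - P.W s t ω) 2 μ :=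
      (P.memLp_diff hA s t).mono_exponent (by norm_num)
    have hmemUtWr : MemLp (fun ω => P.U t ω * P.W r t ω) 2 μ :=
      memLp2_mul (P.memLp4 hA t) (P.memLpW hA r t)
    have h1 : Integrable (fun ω => (P.U t ω * P.U s ω) * (P.U r ω - P.W r t ω)) μ :=
      integrable_mul2 hmemUtUs hdiffr2
    have h2 : Integrable (fun ω => (P.U t ω * P.W r t ω) * (P.U s ω - P.W s t ω)) μ :=
      integrable_mul2 hmemUtWr hdiffs2
    have h3 : Integrable (fun ω => P.U t ω * (P.W s t ω * P.W r t ω)) μ :=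
      integrable_mul2 ((P.memLp4 hA t).mono_exponent (by norm_num))
        (memLp2_mul (P.memLpW hA s t) (P.memLpW hA r t))
    have hsplit : (fun ω => P.U t ω * P.U s ω * P.U r ω)
        = fun ω => ((P.U t ω * P.U s ω) * (P.U r ω - P.W r t ω)
            + (P.U t ω * P.W r t ω) * (P.U s ω - P.W s t ω))
            + P.U t ω * (P.W s t ω * P.W r t ω) := by
      funext ω; ring
    have hdecomp : ∫ ω, P.U t ω * P.U s ω * P.U r ω ∂μ
        = ∫ ω, (P.U t ω * P.U s ω) * (P.U r ω - P.W r t ω) ∂μ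
          + ∫ ω, (P.U t ω * P.W r t ω) * (P.U s ω - P.W s t ω) ∂μ := by
      have h12 : Integrable (fun ω => (P.U t ω * P.U s ω) * (P.U r ω - P.W r t ω)
          + (P.U t ω * P.W r t ω) * (P.U s ω - P.W s t ω)) μ := h1.add h2
      rw [hsplit, integral_add h12 h3, P.integral_U_mul_WW hA t s r, add_zero,
        integral_add h1 h2]
    rw [hdecomp]
    have hb1 : |∫ ω, (P.U t ω * P.U s ω) * (P.U r ω - P.W r t ω) ∂μ|
        ≤ (P.M4 ^ 2 * P.lamN δ ((s - t).toNat + (r - s).toNat)).toReal := by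
      refine (abs_integral_mul_le hmemUtUs hdiffr2).trans
        (ENNReal.toReal_mono (ENNReal.mul_ne_top (ENNReal.pow_ne_top hM4) (P.lamN_ne_top hA _)) ?_)
      refine mul_le_mul' hUtUs_le ?_
      have hk : (s - t).toNat + (r - s).toNat = (r - t).toNat := by omega
      rw [hk, P.lamN_coe (by omega : (0:ℤ) ≤ r - t)]
      exact P.eLpNorm2_diff_le hA r t
    have hb2 : |∫ ω, (P.U t ω * P.W r t ω) * (P.U s ω - P.W s t ω) ∂μ|
        ≤ (P.M4 ^ 2 * P.lamN δ ((s - t).toNat ⊔ (r - s).toNat)).toReal := by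
      refine (abs_integral_mul_le hmemUtWr hdiffs2).trans
        (ENNReal.toReal_mono (ENNReal.mul_ne_top (ENNReal.pow_ne_top hM4) (P.lamN_ne_top hA _)) ?_)
      refine mul_le_mul' ?_ ?_
      · calc eLpNorm (fun ω => P.U t ω * P.W r t ω) 2 μ
            ≤ eLpNorm (P.U t) 4 μ * eLpNorm (P.W r t) 4 μ :=
              eLpNorm2_mul_le (P.memLp4 hA t).1 (P.memLpW hA r t).1
          _ = P.M4 ^ 2 := by rw [P.eLpNorm4_eq, P.eLpNormW4, sq]
      · have hsup : (s - t).toNat ⊔ (r - s).toNat = (s - t).toNat := by omega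
        rw [hsup, P.lamN_coe (by omega : (0:ℤ) ≤ s - t)]
        exact P.eLpNorm2_diff_le hA s t
    calc |∫ ω, (P.U t ω * P.U s ω) * (P.U r ω - P.W r t ω) ∂μ
          + ∫ ω, (P.U t ω * P.W r t ω) * (P.U s ω - P.W s t ω) ∂μ|
        ≤ |∫ ω, (P.U t ω * P.U s ω) * (P.U r ω - P.W r t ω) ∂μ|
          + |∫ ω, (P.U t ω * P.W r t ω) * (P.U s ω - P.W s t ω) ∂μ| := abs_add_le _ _
      _ ≤ (P.M4 ^ 2 * P.lamN δ ((s - t).toNat + (r - s).toNat)).toReal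
          + (P.M4 ^ 2 * P.lamN δ ((s - t).toNat ⊔ (r - s).toNat)).toReal :=
            add_le_add hb1 hb2
      _ = (P.M4 ^ 2 * (P.lamN δ ((s - t).toNat ⊔ (r - s).toNat)
          + P.lamN δ ((s - t).toNat + (r - s).toNat))).toReal := by
        rw [mul_add, ENNReal.toReal_add (ENNReal.mul_ne_top (ENNReal.pow_ne_top hM4)
          (P.lamN_ne_top hA _)) (ENNReal.mul_ne_top (ENNReal.pow_ne_top hM4) (P.lamN_ne_top hA _))]
        ring

/-! ### Sorting of triples -/

def sort3 (x : ℤ × ℤ × ℤ) : ℤ × ℤ × ℤ :=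
  (min x.1 (min x.2.1 x.2.2),
   x.1 + x.2.1 + x.2.2 - min x.1 (min x.2.1 x.2.2) - max x.1 (max x.2.1 x.2.2),
   max x.1 (max x.2.1 x.2.2))

lemma sort3_cases (x : ℤ × ℤ × ℤ) :
    sort3 x = (x.1, x.2.1, x.2.2) ∨ sort3 x = (x.1, x.2.2, x.2.1) ∨
    sort3 x = (x.2.1, x.1, x.2.2) ∨ sort3 x = (x.2.1, x.2.2, x.1) ∨
    sort3 x = (x.2.2, x.1, x.2.1) ∨ sort3 x = (x.2.2, x.2.1, x.1) := by
  obtain ⟨t, s, r⟩ := x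
  simp only [sort3, Prod.mk.injEq]
  omega

lemma sort3_sorted (x : ℤ × ℤ × ℤ) :
    (sort3 x).1 ≤ (sort3 x).2.1 ∧ (sort3 x).2.1 ≤ (sort3 x).2.2 := by
  obtain ⟨t, s, r⟩ := x
  simp only [sort3]
  omega

lemma card6 {X : Type*} [DecidableEq X] (a b c d e f : X) :
    ({a, b, c, d, e, f} : Finset X).card ≤ 6 := by
  have h2 : ({e, f} : Finset X).card ≤ 2 := (Finset.card_insert_le _ _).trans (by simp)
  have h3 : ({d, e, f} : Finset X).card ≤ 3 :=
    (Finset.card_insert_le _ _).trans (by omega)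
  have h4 : ({c, d, e, f} : Finset X).card ≤ 4 :=
    (Finset.card_insert_le _ _).trans (by omega)
  have h5 : ({b, c, d, e, f} : Finset X).card ≤ 5 :=
    (Finset.card_insert_le _ _).trans (by omega)
  exact (Finset.card_insert_le _ _).trans (by omega)

/-- any fiber of `sort3` has at most 6 elements -/
lemma sort3_fiber_card_le (s : Finset (ℤ × ℤ × ℤ)) (y : ℤ × ℤ × ℤ) :
    (s.filter fun x => sort3 x = y).card ≤ 6 := by
  classical
  have hsub : (s.filter fun x => sort3 x = y) ⊆
      ({(y.1, y.2.1, y.2.2), (y.1, y.2.2, y.2.1), (y.2.1, y.1, y.2.2),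
        (y.2.1, y.2.2, y.1), (y.2.2, y.1, y.2.1), (y.2.2, y.2.1, y.1)} :
        Finset (ℤ × ℤ × ℤ)) := by
    intro x hx
    rw [Finset.mem_filter] at hx
    have hs3 := hx.2
    rcases sort3_cases x with h | h | h | h | h | h <;> rw [h] at hs3 <;>
      obtain ⟨t, s', r⟩ := x <;>
      simp only [Prod.ext_iff] at hs3 <;>
      simp only [Finset.mem_insert, Finset.mem_singleton, Prod.mk.injEq] <;>
      omega
  exact (Finset.card_le_card hsub).trans (card6 _ _ _ _ _ _)

/-! ### Summability of the coefficients -/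

/-- `∑ (2m+2) Λ_m`, a finite constant under Assumption 1. -/
noncomputable def PhysDep.cLam (δ : ℝ) : ℝ≥0∞ :=
  ∑' m : ℕ, ((2 * m + 2 : ℕ) : ℝ≥0∞) * P.lamN δ m

lemma PhysDep.cLam_ne_top (hA : Assumption1 P δ) : P.cLam δ ≠ ⊤ := by
  have hb : ∀ m : ℕ, ((2 * m + 2 : ℕ) : ℝ≥0∞) * P.lamN δ m
      ≤ 4 * ((m : ℝ≥0∞) ^ 2 * P.lamN δ m) + (if m = 0 then 2 * P.lamN δ 0 else 0) := by
    intro m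
    rcases Nat.eq_zero_or_pos m with h0 | h1
    · subst h0
      simp only [if_pos rfl]
      refine le_trans ?_ le_add_self
      norm_num
    · rw [if_neg (by omega), add_zero]
      have hc : ((2 * m + 2 : ℕ) : ℝ≥0∞) ≤ ((4 * m ^ 2 : ℕ) : ℝ≥0∞) :=
        Nat.cast_le.2 (by nlinarith)
      calc ((2 * m + 2 : ℕ) : ℝ≥0∞) * P.lamN δ m
          ≤ ((4 * m ^ 2 : ℕ) : ℝ≥0∞) * P.lamN δ m := mul_le_mul_left hc _
        _ = 4 * ((m : ℝ≥0∞) ^ 2 * P.lamN δ m) := by push_cast; ring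
  have hle : P.cLam δ ≤ 4 * (∑' m : ℕ, (m : ℝ≥0∞) ^ 2 * P.lamN δ m) + 2 * P.lamN δ 0 := by
    calc P.cLam δ ≤ ∑' m : ℕ, (4 * ((m : ℝ≥0∞) ^ 2 * P.lamN δ m)
        + (if m = 0 then 2 * P.lamN δ 0 else 0)) := ENNReal.tsum_le_tsum hb
      _ = 4 * (∑' m : ℕ, (m : ℝ≥0∞) ^ 2 * P.lamN δ m) + 2 * P.lamN δ 0 := by
        rw [ENNReal.tsum_add, ENNReal.tsum_mul_left, tsum_ite_eq]
  refine (lt_of_le_of_lt hle ?_).ne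
  have hsum : (∑' m : ℕ, (m : ℝ≥0∞) ^ 2 * P.lamN δ m) ≠ ⊤ := hA.summable
  exact ENNReal.add_lt_top.2 ⟨ENNReal.mul_lt_top (by norm_num) hsum.lt_top,
    ENNReal.mul_lt_top (by norm_num) (P.lamN_ne_top hA 0).lt_top⟩

lemma PhysDep.sum_lam_max_le (δ : ℝ) (T : ℕ) :
    ∑ p ∈ Finset.range T ×ˢ Finset.range T, P.lamN δ (p.1 ⊔ p.2) ≤ P.cLam δ := by
  classical
  rw [Finset.sum_comp (fun m => P.lamN δ m) (fun p : ℕ × ℕ => p.1 ⊔ p.2)]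
  have hcard : ∀ m : ℕ,
      ((Finset.range T ×ˢ Finset.range T).filter (fun p => p.1 ⊔ p.2 = m)).card
        ≤ 2 * m + 2 := by
    intro m
    have hsub : (Finset.range T ×ˢ Finset.range T).filter (fun p => p.1 ⊔ p.2 = m)
        ⊆ (Finset.range (m + 1) ×ˢ ({m} : Finset ℕ))
          ∪ (({m} : Finset ℕ) ×ˢ Finset.range (m + 1)) := by
      intro p hp
      simp only [Finset.mem_filter, Finset.mem_product, Finset.mem_range, Finset.mem_union,
        Finset.mem_singleton] at hp ⊢
      omega
    calc ((Finset.range T ×ˢ Finset.range T).filter (fun p => p.1 ⊔ p.2 = m)).card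
        ≤ ((Finset.range (m + 1) ×ˢ ({m} : Finset ℕ))
            ∪ (({m} : Finset ℕ) ×ˢ Finset.range (m + 1))).card := Finset.card_le_card hsub
      _ ≤ (Finset.range (m + 1) ×ˢ ({m} : Finset ℕ)).card
          + (({m} : Finset ℕ) ×ˢ Finset.range (m + 1)).card := Finset.card_union_le _ _
      _ ≤ 2 * m + 2 := by
          simp only [Finset.card_product, Finset.card_range, Finset.card_singleton]
          omega
  calc ∑ b ∈ (Finset.range T ×ˢ Finset.range T).image (fun p : ℕ × ℕ => p.1 ⊔ p.2),
        ((Finset.range T ×ˢ Finset.range T).filter (fun p => p.1 ⊔ p.2 = b)).card • P.lamN δ b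
      ≤ ∑ b ∈ (Finset.range T ×ˢ Finset.range T).image (fun p : ℕ × ℕ => p.1 ⊔ p.2),
        ((2 * b + 2 : ℕ) : ℝ≥0∞) * P.lamN δ b := by
        refine Finset.sum_le_sum fun b _ => ?_
        rw [nsmul_eq_mul]
        exact mul_le_mul_left (Nat.cast_le.2 (hcard b)) _
    _ ≤ P.cLam δ := Summable.sum_le_tsum _ (fun _ _ => zero_le) ENNReal.summable

lemma PhysDep.sum_lam_add_le (δ : ℝ) (T : ℕ) :
    ∑ p ∈ Finset.range T ×ˢ Finset.range T, P.lamN δ (p.1 + p.2) ≤ P.cLam δ := by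
  classical
  rw [Finset.sum_comp (fun m => P.lamN δ m) (fun p : ℕ × ℕ => p.1 + p.2)]
  have hcard : ∀ m : ℕ,
      ((Finset.range T ×ˢ Finset.range T).filter (fun p => p.1 + p.2 = m)).card
        ≤ 2 * m + 2 := by
    intro m
    have hsub : (Finset.range T ×ˢ Finset.range T).filter (fun p => p.1 + p.2 = m)
        ⊆ (Finset.range (m + 1)).image (fun a => (a, m - a)) := by
      rintro ⟨a, b⟩ hp
      simp only [Finset.mem_filter, Finset.mem_product, Finset.mem_range] at hp
      simp only [Finset.mem_image, Finset.mem_range, Prod.mk.injEq]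
      exact ⟨a, by omega, rfl, by omega⟩
    calc ((Finset.range T ×ˢ Finset.range T).filter (fun p => p.1 + p.2 = m)).card
        ≤ ((Finset.range (m + 1)).image (fun a => (a, m - a))).card :=
          Finset.card_le_card hsub
      _ ≤ m + 1 := (Finset.card_image_le).trans (by simp)
      _ ≤ 2 * m + 2 := by omega
  calc ∑ b ∈ (Finset.range T ×ˢ Finset.range T).image (fun p : ℕ × ℕ => p.1 + p.2),
        ((Finset.range T ×ˢ Finset.range T).filter (fun p => p.1 + p.2 = b)).card • P.lamN δ b
      ≤ ∑ b ∈ (Finset.range T ×ˢ Finset.range T).image (fun p : ℕ × ℕ => p.1 + p.2),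
        ((2 * b + 2 : ℕ) : ℝ≥0∞) * P.lamN δ b := by
        refine Finset.sum_le_sum fun b _ => ?_
        rw [nsmul_eq_mul]
        exact mul_le_mul_left (Nat.cast_le.2 (hcard b)) _
    _ ≤ P.cLam δ := Summable.sum_le_tsum _ (fun _ _ => zero_le) ENNReal.summable

/-! ### The triple sum bound -/

/-- The bound kernel. -/
noncomputable def PhysDep.Knl (δ : ℝ) (a b : ℕ) : ℝ≥0∞ :=
  P.M4 ^ 2 * (P.lamN δ (a ⊔ b) + P.lamN δ (a + b))

lemma PhysDep.Knl_ne_top (hA : Assumption1 P δ) (a b : ℕ) : P.Knl δ a b ≠ ⊤ :=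
  ENNReal.mul_ne_top (ENNReal.pow_ne_top (P.M4_ne_top hA))
    (ENNReal.add_ne_top.2 ⟨P.lamN_ne_top hA _, P.lamN_ne_top hA _⟩)

/-- The absolute third-moment summand. -/
noncomputable def PhysDep.tripleInt (x : ℤ × ℤ × ℤ) : ℝ :=
  |∫ ω, P.U x.1 ω * P.U x.2.1 ω * P.U x.2.2 ω ∂μ|

lemma PhysDep.tripleInt_sort (x : ℤ × ℤ × ℤ) : P.tripleInt x = P.tripleInt (sort3 x) := by
  rcases sort3_cases x with h | h | h | h | h | h <;> rw [h] <;>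
    exact congrArg abs (congrArg (integral μ) (funext fun ω => by ring))

set_option maxHeartbeats 2000000 in
lemma PhysDep.sum_tripleInt_le (hA : Assumption1 P δ) (T : ℕ) :
    ∑ x ∈ (Finset.Icc (1:ℤ) (T:ℤ)) ×ˢ ((Finset.Icc (1:ℤ) (T:ℤ)) ×ˢ (Finset.Icc (1:ℤ) (T:ℤ))),
      P.tripleInt x ≤ 6 * T * (P.M4 ^ 2 * (P.cLam δ + P.cLam δ)).toReal := by
  classical
  set I := Finset.Icc (1:ℤ) (T:ℤ) with hI
  set s := I ×ˢ (I ×ˢ I) with hs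
  have hcne : P.M4 ^ 2 * (P.cLam δ + P.cLam δ) ≠ ⊤ :=
    ENNReal.mul_ne_top (ENNReal.pow_ne_top (P.M4_ne_top hA))
      (ENNReal.add_ne_top.2 ⟨P.cLam_ne_top hA, P.cLam_ne_top hA⟩)
  have h1 : ∑ x ∈ s, P.tripleInt x = ∑ x ∈ s, P.tripleInt (sort3 x) :=
    Finset.sum_congr rfl fun x _ => P.tripleInt_sort x
  have h2 : ∑ x ∈ s, P.tripleInt (sort3 x)
      = ∑ y ∈ s.image sort3, ((s.filter fun x => sort3 x = y).card) • P.tripleInt y :=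
    Finset.sum_comp _ sort3
  have h3 : ∀ y ∈ s.image sort3, ((s.filter fun x => sort3 x = y).card) • P.tripleInt y
      ≤ 6 * (P.Knl δ ((y.2.1 - y.1).toNat) ((y.2.2 - y.2.1).toNat)).toReal := by
    intro y hy
    obtain ⟨x, hx, rfl⟩ := Finset.mem_image.mp hy
    have hsort := sort3_sorted x
    have hb := P.triple_bound hA hsort.1 hsort.2
    rw [nsmul_eq_mul]
    refine mul_le_mul ?_ hb (abs_nonneg _) (by norm_num)
    exact_mod_cast sort3_fiber_card_le s (sort3 x)
  have h5 : ∑ y ∈ s.image sort3,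
        (P.Knl δ ((y.2.1 - y.1).toNat) ((y.2.2 - y.2.1).toNat)).toReal
      ≤ ∑ z ∈ I ×ˢ (Finset.range T ×ˢ Finset.range T), (P.Knl δ z.2.1 z.2.2).toReal := by
    have hmem : ∀ y ∈ s.image sort3, y.1 ∈ I ∧ y.2.1 ∈ I ∧ y.2.2 ∈ I
        ∧ y.1 ≤ y.2.1 ∧ y.2.1 ≤ y.2.2 := by
      intro y hy
      obtain ⟨x, hx, rfl⟩ := Finset.mem_image.mp hy
      have hx' := hx
      rw [hs, Finset.mem_product, Finset.mem_product] at hx'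
      refine ⟨?_, ?_, ?_, (sort3_sorted x).1, (sort3_sorted x).2⟩ <;>
        rcases sort3_cases x with h | h | h | h | h | h <;> rw [h] <;> tauto
    have hinj : ∀ y ∈ s.image sort3, ∀ y' ∈ s.image sort3,
        (fun y : ℤ × ℤ × ℤ => (y.1, ((y.2.1 - y.1).toNat, (y.2.2 - y.2.1).toNat))) y
          = (fun y : ℤ × ℤ × ℤ => (y.1, ((y.2.1 - y.1).toNat, (y.2.2 - y.2.1).toNat))) y'
          → y = y' := by
      intro y hy y' hy' h
      obtain ⟨-, -, -, hs1, hs2⟩ := hmem y hy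
      obtain ⟨-, -, -, hs1', hs2'⟩ := hmem y' hy'
      obtain ⟨a1, b1, c1⟩ := y
      obtain ⟨a2, b2, c2⟩ := y'
      simp only [Prod.mk.injEq] at h ⊢
      simp only at hs1 hs2 hs1' hs2'
      omega
    have himg : ∑ z ∈ (s.image sort3).image
          (fun y : ℤ × ℤ × ℤ => (y.1, ((y.2.1 - y.1).toNat, (y.2.2 - y.2.1).toNat))),
          (P.Knl δ z.2.1 z.2.2).toReal
        = ∑ y ∈ s.image sort3,
          (P.Knl δ ((y.2.1 - y.1).toNat) ((y.2.2 - y.2.1).toNat)).toReal :=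
      Finset.sum_image hinj
    rw [← himg]
    refine Finset.sum_le_sum_of_subset_of_nonneg ?_ (fun _ _ _ => ENNReal.toReal_nonneg)
    intro z hz
    obtain ⟨y, hy, rfl⟩ := Finset.mem_image.mp hz
    obtain ⟨hm1, hm2, hm3, hm4, hm5⟩ := hmem y hy
    rw [hI, Finset.mem_Icc] at hm1 hm2 hm3
    rw [Finset.mem_product, Finset.mem_product]
    refine ⟨by rw [hI, Finset.mem_Icc]; exact ⟨hm1.1, hm1.2⟩, ?_, ?_⟩ <;>
      · simp only [Finset.mem_range]
        omega
  have h6 : ∑ z ∈ I ×ˢ (Finset.range T ×ˢ Finset.range T), (P.Knl δ z.2.1 z.2.2).toReal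
      = T * ∑ p ∈ Finset.range T ×ˢ Finset.range T, (P.Knl δ p.1 p.2).toReal := by
    rw [Finset.sum_product]
    dsimp only
    rw [Finset.sum_const, nsmul_eq_mul]
    congr 1
    rw [hI, Int.card_Icc]
    simp
  have h7 : ∑ p ∈ Finset.range T ×ˢ Finset.range T, (P.Knl δ p.1 p.2).toReal
      ≤ (P.M4 ^ 2 * (P.cLam δ + P.cLam δ)).toReal := by
    rw [← ENNReal.toReal_sum (fun p _ => P.Knl_ne_top hA p.1 p.2)]
    refine ENNReal.toReal_mono hcne ?_
    calc ∑ p ∈ Finset.range T ×ˢ Finset.range T, P.Knl δ p.1 p.2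
        = P.M4 ^ 2 * (∑ p ∈ Finset.range T ×ˢ Finset.range T, P.lamN δ (p.1 ⊔ p.2)
          + ∑ p ∈ Finset.range T ×ˢ Finset.range T, P.lamN δ (p.1 + p.2)) := by
          simp only [PhysDep.Knl]
          rw [← Finset.sum_add_distrib, Finset.mul_sum]
      _ ≤ P.M4 ^ 2 * (P.cLam δ + P.cLam δ) :=
          mul_le_mul_right (add_le_add (P.sum_lam_max_le δ T) (P.sum_lam_add_le δ T)) _
  calc ∑ x ∈ s, P.tripleInt x
      = ∑ y ∈ s.image sort3, ((s.filter fun x => sort3 x = y).card) • P.tripleInt y := by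
        rw [h1, h2]
    _ ≤ ∑ y ∈ s.image sort3,
        6 * (P.Knl δ ((y.2.1 - y.1).toNat) ((y.2.2 - y.2.1).toNat)).toReal :=
        Finset.sum_le_sum h3
    _ = 6 * ∑ y ∈ s.image sort3,
        (P.Knl δ ((y.2.1 - y.1).toNat) ((y.2.2 - y.2.1).toNat)).toReal := by
        rw [Finset.mul_sum]
    _ ≤ 6 * (T * (P.M4 ^ 2 * (P.cLam δ + P.cLam δ)).toReal) := by
        refine mul_le_mul_of_nonneg_left ?_ (by norm_num)
        refine (h5.trans ?_)
        rw [h6]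
        refine mul_le_mul_of_nonneg_left h7 (by positivity)
    _ = 6 * T * (P.M4 ^ 2 * (P.cLam δ + P.cLam δ)).toReal := by ring

end Moments

/-- Lemma B.2, part 3: `|E[S_T³]| ≤ C T^{−1/2}` for all `T ≥ 1`. -/
theorem statement13 {Ω : Type*} [MeasurableSpace Ω] {μ : Measure Ω} [IsProbabilityMeasure μ]
    {E : Type*} [MeasurableSpace E] (P : PhysDep μ E) {δ : ℝ}
    (hA : Assumption1 P δ) :
    ∃ C : ℝ, 0 < C ∧ ∀ T : ℕ, 1 ≤ T →
      |∫ ω, (P.S T ω) ^ 3 ∂μ| ≤ C / Real.sqrt T := by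
  classical
  refine ⟨6 * (P.M4 ^ 2 * (P.cLam δ + P.cLam δ)).toReal + 1, by positivity, ?_⟩
  intro T hT
  have hTpos : (0:ℝ) < (T:ℝ) := by exact_mod_cast Nat.lt_of_lt_of_le Nat.zero_lt_one hT
  have hsqpos : (0:ℝ) < Real.sqrt T := Real.sqrt_pos.2 hTpos
  set I := Finset.Icc (1:ℤ) (T:ℤ) with hI
  have hint : ∀ x : ℤ × ℤ × ℤ,
      Integrable (fun ω => P.U x.1 ω * P.U x.2.1 ω * P.U x.2.2 ω) μ := by
    intro x
    exact integrable_mul2 (memLp2_mul (P.memLp4 hA _) (P.memLp4 hA _))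
      ((P.memLp4 hA _).mono_exponent (by norm_num))
  have hexpand : ∀ ω : Ω, (P.S T ω) ^ 3
      = (∑ x ∈ I ×ˢ (I ×ˢ I), P.U x.1 ω * P.U x.2.1 ω * P.U x.2.2 ω)
        / (Real.sqrt T) ^ 3 := by
    intro ω
    have hrhs : ∑ x ∈ I ×ˢ (I ×ˢ I), P.U x.1 ω * P.U x.2.1 ω * P.U x.2.2 ω
        = ∑ t ∈ I, ∑ u ∈ I, ∑ r ∈ I, P.U t ω * P.U u ω * P.U r ω := by
      rw [Finset.sum_product]
      refine Finset.sum_congr rfl fun t _ => ?_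
      rw [Finset.sum_product]
    have hlhs : (∑ t ∈ I, P.U t ω) ^ 3
        = ∑ t ∈ I, ∑ u ∈ I, ∑ r ∈ I, P.U t ω * P.U u ω * P.U r ω := by
      rw [show ((∑ t ∈ I, P.U t ω) ^ 3) = (∑ t ∈ I, P.U t ω)
        * ((∑ t ∈ I, P.U t ω) * (∑ t ∈ I, P.U t ω)) from by ring]
      rw [Finset.sum_mul]
      refine Finset.sum_congr rfl fun t _ => ?_
      rw [Finset.sum_mul, Finset.mul_sum]
      refine Finset.sum_congr rfl fun u _ => ?_
      rw [Finset.mul_sum, Finset.mul_sum]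
      refine Finset.sum_congr rfl fun r _ => ?_
      ring
    show ((∑ t ∈ I, P.U t ω) / Real.sqrt T) ^ 3 = _
    rw [div_pow]
    rw [hlhs, hrhs]
  have hSint : ∫ ω, (P.S T ω) ^ 3 ∂μ
      = (∑ x ∈ I ×ˢ (I ×ˢ I), ∫ ω, P.U x.1 ω * P.U x.2.1 ω * P.U x.2.2 ω ∂μ)
        / (Real.sqrt T) ^ 3 := by
    rw [integral_congr_ae (Filter.Eventually.of_forall hexpand)]
    rw [integral_div, integral_finset_sum _ (fun x _ => hint x)]
  rw [hSint, abs_div, abs_of_pos (pow_pos hsqpos 3)]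
  have habs : |∑ x ∈ I ×ˢ (I ×ˢ I), ∫ ω, P.U x.1 ω * P.U x.2.1 ω * P.U x.2.2 ω ∂μ|
      ≤ ∑ x ∈ I ×ˢ (I ×ˢ I), P.tripleInt x := Finset.abs_sum_le_sum_abs _ _
  have hb := habs.trans (P.sum_tripleInt_le hA T)
  have hcube : (Real.sqrt T) ^ 3 = T * Real.sqrt T := by
    rw [pow_succ, Real.sq_sqrt hTpos.le]
  have hTne : (T:ℝ) ≠ 0 := ne_of_gt hTpos
  calc |∑ x ∈ I ×ˢ (I ×ˢ I), ∫ ω, P.U x.1 ω * P.U x.2.1 ω * P.U x.2.2 ω ∂μ|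
        / (Real.sqrt T) ^ 3
      ≤ (6 * T * (P.M4 ^ 2 * (P.cLam δ + P.cLam δ)).toReal) / (Real.sqrt T) ^ 3 := by
        gcongr
    _ = (6 * (P.M4 ^ 2 * (P.cLam δ + P.cLam δ)).toReal) / Real.sqrt T := by
        rw [hcube]
        field_simp
    _ ≤ (6 * (P.M4 ^ 2 * (P.cLam δ + P.cLam δ)).toReal + 1) / Real.sqrt T := by
        gcongr
        linarith

end PanelPaper
end

section
/- (Example 1, part 1: a linear (MA(∞)) panel process satisfies Assumption 1 with geometric rate.) Assume only the operator-norm condition ‖B^{(N)}_j‖ ≤ C₀ρ^j and E|ε₁₁|⁴ < ∞. Let Ū*^{(N)}_t denote the coupled version of Ū^{(N)}_t obtained by replacing ε^{(N)}_s with ε'^{(N)}_s for all s ≤ 0, where (ε'^{(N)}_t) is an independent copy of (ε^{(N)}_t). Then there exists a constant C, depending only on C₀, ρ and the second and fourth moments of ε₁₁ (and not on N or t), such that for all N ≥ 1 and all t ≥ 0: ‖Ū^{(N)}_t − Ū*^{(N)}_t‖_{L⁴} ≤ C·ρ^t. Consequently ∑_{t=0}^∞ t² ‖Ū^{(N)}_t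 − Ū*^{(N)}_t‖_{L⁴} < ∞ uniformly in N, i.e., Assumption 1 holds with δ = 4. -/
open MeasureTheory ProbabilityTheory Filter
open scoped ENNReal NNReal Topology Classical

namespace PanelPaper

variable {Ω : Type*} [MeasurableSpace Ω]

/-- Coordinate `u_{it}` of the linear (MA(∞)) panel process `U_t = ∑_j B_j ε_{t−j}`. -/
noncomputable def uCoord (ε : (N : ℕ) → ℤ → Ω → Fin N → ℝ)
    (B : (N : ℕ) → ℕ → Matrix (Fin N) (Fin N) ℝ)
    (N : ℕ) (t : ℤ) (ω : Ω) (i : Fin N) : ℝ :=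
  ∑' j : ℕ, (B N j).mulVec (ε N (t - (j : ℤ)) ω) i

/-- Cross-sectional average `Ū_t = N^{-1/2} ∑_i u_{it}`. -/
noncomputable def UbarLin (ε : (N : ℕ) → ℤ → Ω → Fin N → ℝ)
    (B : (N : ℕ) → ℕ → Matrix (Fin N) (Fin N) ℝ)
    (N : ℕ) (t : ℤ) (ω : Ω) : ℝ :=
  (∑ i : Fin N, uCoord ε B N t ω i) / Real.sqrt N

/-- `S_{N,T} = T^{-1/2} ∑_{t=1}^T Ū_t`. -/
noncomputable def SLin (ε : (N : ℕ) → ℤ → Ω → Fin N → ℝ)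
    (B : (N : ℕ) → ℕ → Matrix (Fin N) (Fin N) ℝ)
    (N T : ℕ) (ω : Ω) : ℝ :=
  (∑ t ∈ Finset.Icc (1 : ℤ) (T : ℤ), UbarLin ε B N t ω) / Real.sqrt T

/-- Operator (spectral) norm of a square real matrix. -/
noncomputable def opNorm {N : ℕ} (A : Matrix (Fin N) (Fin N) ℝ) : ℝ :=
  ‖Matrix.toEuclideanCLM (𝕜 := ℝ) A‖


/-- Coordinate of the coupled process: `ε_s` is replaced by `ε'_s` for `s ≤ 0`. -/
noncomputable def uCoordStar (ε ε' : (N : ℕ) → ℤ → Ω → Fin N → ℝ)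
    (B : (N : ℕ) → ℕ → Matrix (Fin N) (Fin N) ℝ)
    (N : ℕ) (t : ℤ) (ω : Ω) (i : Fin N) : ℝ :=
  ∑' j : ℕ, (B N j).mulVec
    (fun l => if 1 ≤ t - (j : ℤ) then ε N (t - (j : ℤ)) ω l else ε' N (t - (j : ℤ)) ω l) i

/-- Cross-sectional average of the coupled process. -/
noncomputable def UbarLinStar (ε ε' : (N : ℕ) → ℤ → Ω → Fin N → ℝ)
    (B : (N : ℕ) → ℕ → Matrix (Fin N) (Fin N) ℝ)
    (N : ℕ) (t : ℤ) (ω : Ω) : ℝ :=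
  (∑ i : Fin N, uCoordStar ε ε' B N t ω i) / Real.sqrt N


section Aux

variable {Ω' : Type*} [MeasurableSpace Ω'] {μ : Measure Ω'}

set_option linter.unusedSectionVars false

lemma opNorm_nonneg {N : ℕ} (A : Matrix (Fin N) (Fin N) ℝ) : 0 ≤ opNorm A := norm_nonneg _

lemma mulVec_sq_sum_le {N : ℕ} (A : Matrix (Fin N) (Fin N) ℝ) (y : Fin N → ℝ) :
    ∑ i, (A.mulVec y i)^2 ≤ (opNorm A)^2 * ∑ k, (y k)^2 := by
  set x : EuclideanSpace ℝ (Fin N) := (WithLp.equiv 2 (Fin N → ℝ)).symm y with hx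
  have h1 : ‖Matrix.toEuclideanCLM (𝕜 := ℝ) A x‖ ≤ opNorm A * ‖x‖ :=
    (Matrix.toEuclideanCLM (𝕜 := ℝ) A).le_opNorm x
  have hax : Matrix.toEuclideanCLM (𝕜 := ℝ) A x
      = (WithLp.equiv 2 (Fin N → ℝ)).symm (A.mulVec y) := by
    rw [hx]; rfl
  have hx2 : ‖x‖^2 = ∑ k, (y k)^2 := by
    rw [EuclideanSpace.norm_eq, Real.sq_sqrt (by positivity)]
    simp [hx, sq_abs]
  have hax2 : ‖Matrix.toEuclideanCLM (𝕜 := ℝ) A x‖^2 = ∑ i, (A.mulVec y i)^2 := by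
    rw [hax, EuclideanSpace.norm_eq, Real.sq_sqrt (by positivity)]
    simp [sq_abs]
  calc ∑ i, (A.mulVec y i)^2 = ‖Matrix.toEuclideanCLM (𝕜 := ℝ) A x‖^2 := hax2.symm
    _ ≤ (opNorm A * ‖x‖)^2 := by
        apply pow_le_pow_left₀ (norm_nonneg _) h1
    _ = (opNorm A)^2 * ∑ k, (y k)^2 := by rw [mul_pow, hx2]

lemma wsum_le {N : ℕ} (hN : 1 ≤ N) (A : Matrix (Fin N) (Fin N) ℝ) :
    ∑ k, ((∑ i, A i k) / Real.sqrt N)^2 ≤ (opNorm A)^2 := by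
  have hNpos : (0:ℝ) < N := by exact_mod_cast hN
  have hsq : (Real.sqrt N)^2 = N := Real.sq_sqrt (le_of_lt hNpos)
  have hsqpos : (0:ℝ) < Real.sqrt N := Real.sqrt_pos.2 hNpos
  set w : Fin N → ℝ := fun k => (∑ i, A i k) / Real.sqrt N with hw
  have hWnn : 0 ≤ ∑ k, (w k)^2 := Finset.sum_nonneg fun k _ => sq_nonneg _
  have e1 : ∑ i, A.mulVec w i = ∑ k, (∑ i, A i k) * w k := by
    simp only [Matrix.mulVec, dotProduct]
    rw [Finset.sum_comm]
    simp [Finset.sum_mul]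
  have step1 : (∑ i, A.mulVec w i) / Real.sqrt N = ∑ k, (w k)^2 := by
    rw [e1, Finset.sum_div]
    apply Finset.sum_congr rfl
    intro k _
    have h0 : Real.sqrt N ≠ 0 := ne_of_gt hsqpos
    simp only [hw]
    field_simp
  have cs : (∑ i, A.mulVec w i)^2 ≤ (N:ℝ) * ∑ i, (A.mulVec w i)^2 := by
    have := Finset.sum_mul_sq_le_sq_mul_sq Finset.univ (fun _ : Fin N => (1:ℝ))
      (fun i => A.mulVec w i)
    simpa using this
  have opb : ∑ i, (A.mulVec w i)^2 ≤ (opNorm A)^2 * ∑ k, (w k)^2 := mulVec_sq_sum_le A w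
  have step2 : (∑ k, (w k)^2)^2 ≤ (opNorm A)^2 * ∑ k, (w k)^2 := by
    have h2 : (∑ k, (w k)^2)^2 = (∑ i, A.mulVec w i)^2 / N := by
      rw [← step1, div_pow, hsq]
    rw [h2, div_le_iff₀ hNpos]
    calc (∑ i, A.mulVec w i)^2 ≤ (N:ℝ) * ∑ i, (A.mulVec w i)^2 := cs
      _ ≤ (N:ℝ) * ((opNorm A)^2 * ∑ k, (w k)^2) := by
          exact mul_le_mul_of_nonneg_left opb (le_of_lt hNpos)
      _ = (opNorm A)^2 * (∑ k, (w k)^2) * N := by ring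
  rcases eq_or_lt_of_le hWnn with h | h
  · calc ∑ k, (w k)^2 = 0 := h.symm
      _ ≤ (opNorm A)^2 := sq_nonneg _
  · exact le_of_mul_le_mul_right (by nlinarith) h

lemma aux_pow_le (a : ℝ) (j : ℕ) (hj : j ≤ 4) : |a|^j ≤ 1 + |a|^4 := by
  rcases le_or_gt (|a|) 1 with h | h
  · calc |a|^j ≤ 1^j := pow_le_pow_left₀ (abs_nonneg a) h j
      _ = 1 := one_pow j
      _ ≤ 1 + |a|^4 := le_add_of_nonneg_right (by positivity)
  · calc |a|^j ≤ |a|^4 := pow_le_pow_right₀ (le_of_lt h) hj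
      _ ≤ 1 + |a|^4 := by linarith

lemma aux_abs_pow_mul_le (a b : ℝ) (k m : ℕ) :
    |a|^k * |b|^m ≤ |a|^(k+m) + |b|^(k+m) := by
  rcases le_total (|a|) (|b|) with h | h
  · calc |a|^k * |b|^m ≤ |b|^k * |b|^m := by
          apply mul_le_mul_of_nonneg_right (pow_le_pow_left₀ (abs_nonneg a) h k) (by positivity)
      _ = |b|^(k+m) := (pow_add _ _ _).symm
      _ ≤ |a|^(k+m) + |b|^(k+m) := le_add_of_nonneg_left (by positivity)
  · calc |a|^k * |b|^m ≤ |a|^k * |a|^m := by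
          apply mul_le_mul_of_nonneg_left (pow_le_pow_left₀ (abs_nonneg b) h m) (by positivity)
      _ = |a|^(k+m) := (pow_add _ _ _).symm
      _ ≤ |a|^(k+m) + |b|^(k+m) := le_add_of_nonneg_right (by positivity)

lemma aux_integrable_abs_pow4 [IsProbabilityMeasure μ] {f : Ω' → ℝ} (hf : MemLp f 4 μ) :
    Integrable (fun ω => |f ω|^4) μ := by
  have h := hf.integrable_norm_rpow (by norm_num) (by norm_num)
  refine (integrable_congr (Filter.Eventually.of_forall fun ω => ?_)).1 h
  show ‖f ω‖ ^ ((4:ℝ≥0∞).toReal) = |f ω| ^ (4:ℕ)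
  rw [show ((4:ℝ≥0∞)).toReal = ((4:ℕ):ℝ) by norm_num, Real.rpow_natCast]
  rfl

lemma aux_integrable_mul_pow [IsProbabilityMeasure μ] {f g : Ω' → ℝ}
    (hf : MemLp f 4 μ) (hg : MemLp g 4 μ)
    (k m : ℕ) (hkm : k + m ≤ 4) :
    Integrable (fun ω => f ω ^ k * g ω ^ m) μ := by
  have hmeas : AEStronglyMeasurable (fun ω => f ω ^ k * g ω ^ m) μ :=
    ((hf.aestronglyMeasurable.pow k).mul (hg.aestronglyMeasurable.pow m))
  have hbound : Integrable (fun ω => (1 + |f ω|^4) + (1 + |g ω|^4)) μ :=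
    ((integrable_const 1).add (aux_integrable_abs_pow4 hf)).add
      ((integrable_const 1).add (aux_integrable_abs_pow4 hg))
  refine hbound.mono' hmeas (Filter.Eventually.of_forall fun ω => ?_)
  have h1 : ‖f ω ^ k * g ω ^ m‖ = |f ω|^k * |g ω|^m := by
    rw [norm_mul, norm_pow, norm_pow]; rfl
  rw [h1]
  calc |f ω|^k * |g ω|^m ≤ |f ω|^(k+m) + |g ω|^(k+m) := aux_abs_pow_mul_le _ _ _ _
    _ ≤ (1 + |f ω|^4) + (1 + |g ω|^4) := by
        exact add_le_add (aux_pow_le _ _ hkm) (aux_pow_le _ _ hkm)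

lemma aux_integrable_pow [IsProbabilityMeasure μ] {f : Ω' → ℝ} (hf : MemLp f 4 μ)
    (k : ℕ) (hk : k ≤ 4) :
    Integrable (fun ω => f ω ^ k) μ := by
  have := aux_integrable_mul_pow hf (memLp_const (0:ℝ)) k 0 (by omega)
  simpa using this

/-- Key moment induction: fourth moment of a weighted sum of independent, mean zero
variables with identical second and bounded fourth moments. -/
lemma moment_bound [IsProbabilityMeasure μ] {ι : Type*} (X : ι → Ω' → ℝ) (w : ι → ℝ)
    (m₂ m₄ : ℝ)
    (hm2 : 0 ≤ m₂) (hm24 : m₂^2 ≤ m₄)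
    (hmeas : ∀ i, Measurable (X i)) (hmem : ∀ i, MemLp (X i) 4 μ)
    (hmean : ∀ i, ∫ ω, X i ω ∂μ = 0) (h2 : ∀ i, ∫ ω, (X i ω)^2 ∂μ = m₂)
    (h4 : ∀ i, ∫ ω, (X i ω)^4 ∂μ ≤ m₄)
    (hindep : ∀ (s : Finset ι), ∀ a ∉ s,
      IndepFun (fun ω => ∑ i ∈ s, w i * X i ω) (X a) μ) :
    ∀ s : Finset ι,
      MemLp (fun ω => ∑ i ∈ s, w i * X i ω) 4 μ ∧
      ∫ ω, (∑ i ∈ s, w i * X i ω) ∂μ = 0 ∧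
      ∫ ω, (∑ i ∈ s, w i * X i ω)^2 ∂μ ≤ (∑ i ∈ s, (w i)^2) * m₂ ∧
      ∫ ω, (∑ i ∈ s, w i * X i ω)^4 ∂μ ≤ 3 * m₄ * (∑ i ∈ s, (w i)^2)^2 := by
  classical
  have hm4 : 0 ≤ m₄ := le_trans (sq_nonneg _) hm24
  intro s
  induction s using Finset.induction_on with
  | empty =>
    refine ⟨by simpa using memLp_const (0:ℝ), by simp, by simp, by simp⟩
  | @insert a s ha ih =>
    obtain ⟨ihMem, ihMean, ih2, ih4⟩ := ih
    set T : Ω' → ℝ := fun ω => ∑ i ∈ s, w i * X i ω with hTdef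
    set Y : Ω' → ℝ := X a with hYdef
    set c : ℝ := w a with hcdef
    have hYmem : MemLp Y 4 μ := hmem a
    have hTYindep : IndepFun T Y μ := hindep s a ha
    have hTmeas : Measurable T := Finset.measurable_sum _ fun i _ => ((hmeas i).const_mul _)
    have hYmeas : Measurable Y := hmeas a
    have hTint : Integrable T μ := ihMem.integrable (by norm_num)
    have hYint : Integrable Y μ := hYmem.integrable (by norm_num)
    have wsum_eq : ∑ i ∈ insert a s, (w i)^2 = c^2 + ∑ i ∈ s, (w i)^2 :=
      Finset.sum_insert ha
    have hWnn : 0 ≤ ∑ i ∈ s, (w i)^2 := Finset.sum_nonneg fun i _ => sq_nonneg _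
    have memN : MemLp (fun ω => T ω + c * Y ω) 4 μ := ihMem.add (hYmem.const_mul c)
    have hInt : ∀ k m : ℕ, k + m ≤ 4 → Integrable (fun ω => T ω ^ k * Y ω ^ m) μ :=
      fun k m h => aux_integrable_mul_pow ihMem hYmem k m h
    have factor : ∀ k m : ℕ, ∫ ω, T ω ^ k * Y ω ^ m ∂μ
        = (∫ ω, T ω ^ k ∂μ) * (∫ ω, Y ω ^ m ∂μ) := by
      intro k m
      have hind : IndepFun (fun ω => T ω ^ k) (fun ω => Y ω ^ m) μ :=
        hTYindep.comp (measurable_id.pow_const k) (measurable_id.pow_const m)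
      have := hind.integral_mul_eq_mul_integral ((hTmeas.pow_const k).aestronglyMeasurable)
        ((hYmeas.pow_const m).aestronglyMeasurable)
      simpa [Pi.mul_apply] using this
    have hYmean : ∫ ω, Y ω ∂μ = 0 := hmean a
    have meanN : ∫ ω, (T ω + c * Y ω) ∂μ = 0 := by
      rw [integral_add hTint (hYint.const_mul c), integral_const_mul, ihMean, hYmean]
      simp
    have IT2 : Integrable (fun ω => T ω ^ 2) μ := aux_integrable_pow ihMem 2 (by norm_num)
    have IY2 : Integrable (fun ω => Y ω ^ 2) μ := aux_integrable_pow hYmem 2 (by norm_num)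
    have ITY : Integrable (fun ω => T ω * Y ω) μ := by
      have := hInt 1 1 (by norm_num); simpa using this
    have fTY : ∫ ω, T ω * Y ω ∂μ = 0 := by
      have := factor 1 1
      simp only [pow_one] at this
      rw [this, hYmean, mul_zero]
    have hT2nn : 0 ≤ ∫ ω, T ω ^ 2 ∂μ := integral_nonneg fun ω => sq_nonneg _
    have i2 : ∫ ω, (T ω + c * Y ω)^2 ∂μ
        = ∫ ω, T ω ^ 2 ∂μ + (2*c) * ∫ ω, T ω * Y ω ∂μ + c^2 * ∫ ω, Y ω ^ 2 ∂μ := by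
      have e : (fun ω => (T ω + c * Y ω)^2)
          = fun ω => T ω ^ 2 + (2*c) * (T ω * Y ω) + c^2 * Y ω ^ 2 := by
        funext ω; ring
      have IA : Integrable (fun ω => T ω ^ 2 + (2*c) * (T ω * Y ω)) μ :=
        IT2.add (ITY.const_mul (2*c))
      rw [e, integral_add IA (IY2.const_mul (c^2)),
        integral_add IT2 (ITY.const_mul (2*c)), integral_const_mul, integral_const_mul]
    have hY2 : ∫ ω, Y ω ^ 2 ∂μ = m₂ := h2 a
    have sec : ∫ ω, (T ω + c * Y ω)^2 ∂μ ≤ (c^2 + ∑ i ∈ s, (w i)^2) * m₂ := by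
      rw [i2, fTY, hY2]
      nlinarith [ih2, sq_nonneg c]
    have IT4 : Integrable (fun ω => T ω ^ 4) μ := aux_integrable_pow ihMem 4 (by norm_num)
    have IY4 : Integrable (fun ω => Y ω ^ 4) μ := aux_integrable_pow hYmem 4 (by norm_num)
    have I31 : Integrable (fun ω => T ω ^ 3 * Y ω) μ := by
      have := hInt 3 1 (by norm_num); simpa using this
    have I22 : Integrable (fun ω => T ω ^ 2 * Y ω ^ 2) μ := hInt 2 2 (by norm_num)
    have I13 : Integrable (fun ω => T ω * Y ω ^ 3) μ := by
      have := hInt 1 3 (by norm_num); simpa using this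
    have f31 : ∫ ω, T ω ^ 3 * Y ω ∂μ = 0 := by
      have := factor 3 1
      simp only [pow_one] at this
      rw [this, hYmean, mul_zero]
    have f13 : ∫ ω, T ω * Y ω ^ 3 ∂μ = 0 := by
      have := factor 1 3
      simp only [pow_one] at this
      rw [this, ihMean, zero_mul]
    have f22 : ∫ ω, T ω ^ 2 * Y ω ^ 2 ∂μ = (∫ ω, T ω ^ 2 ∂μ) * m₂ := by
      rw [factor 2 2, hY2]
    have i4 : ∫ ω, (T ω + c * Y ω)^4 ∂μ
        = ∫ ω, T ω ^ 4 ∂μ + (4*c) * ∫ ω, T ω ^ 3 * Y ω ∂μ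
          + (6*c^2) * ∫ ω, T ω ^ 2 * Y ω ^ 2 ∂μ
          + (4*c^3) * ∫ ω, T ω * Y ω ^ 3 ∂μ + c^4 * ∫ ω, Y ω ^ 4 ∂μ := by
      have e : (fun ω => (T ω + c * Y ω)^4)
          = fun ω => T ω ^ 4 + (4*c) * (T ω ^ 3 * Y ω) + (6*c^2) * (T ω ^ 2 * Y ω ^ 2)
            + (4*c^3) * (T ω * Y ω ^ 3) + c^4 * Y ω ^ 4 := by
        funext ω; ring
      have IA1 : Integrable (fun ω => T ω ^ 4 + (4*c) * (T ω ^ 3 * Y ω)) μ :=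
        IT4.add (I31.const_mul (4*c))
      have IA2 : Integrable (fun ω => T ω ^ 4 + (4*c) * (T ω ^ 3 * Y ω)
          + (6*c^2) * (T ω ^ 2 * Y ω ^ 2)) μ := IA1.add (I22.const_mul (6*c^2))
      have IA3 : Integrable (fun ω => T ω ^ 4 + (4*c) * (T ω ^ 3 * Y ω)
          + (6*c^2) * (T ω ^ 2 * Y ω ^ 2) + (4*c^3) * (T ω * Y ω ^ 3)) μ :=
        IA2.add (I13.const_mul (4*c^3))
      rw [e, integral_add IA3 (IY4.const_mul (c^4)), integral_add IA2 (I13.const_mul (4*c^3)),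
        integral_add IA1 (I22.const_mul (6*c^2)), integral_add IT4 (I31.const_mul (4*c)),
        integral_const_mul, integral_const_mul, integral_const_mul, integral_const_mul]
    have hY4 : ∫ ω, Y ω ^ 4 ∂μ ≤ m₄ := h4 a
    have four : ∫ ω, (T ω + c * Y ω)^4 ∂μ ≤ 3 * m₄ * (c^2 + ∑ i ∈ s, (w i)^2)^2 := by
      rw [i4, f31, f13, f22]
      have e1 : 6 * c^2 * ((∫ ω, T ω ^ 2 ∂μ) * m₂)
          ≤ 6 * c^2 * (((∑ i ∈ s, (w i)^2) * m₂) * m₂) := by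
        apply mul_le_mul_of_nonneg_left _ (by positivity)
        exact mul_le_mul_of_nonneg_right ih2 hm2
      have e1' : 6 * c^2 * (((∑ i ∈ s, (w i)^2) * m₂) * m₂)
          ≤ 6 * c^2 * ((∑ i ∈ s, (w i)^2) * m₄) := by
        apply mul_le_mul_of_nonneg_left _ (by positivity)
        calc (∑ i ∈ s, (w i)^2) * m₂ * m₂ = (∑ i ∈ s, (w i)^2) * m₂^2 := by ring
          _ ≤ (∑ i ∈ s, (w i)^2) * m₄ := mul_le_mul_of_nonneg_left hm24 hWnn
      have e2 : c^4 * ∫ ω, Y ω ^ 4 ∂μ ≤ c^4 * m₄ :=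
        mul_le_mul_of_nonneg_left hY4 (by positivity)
      nlinarith [ih4, mul_nonneg hm4 (pow_nonneg (sq_nonneg c) 2),
        mul_nonneg (mul_nonneg hm4 (sq_nonneg c)) hWnn]
    have sum_eq' : ∀ ω, ∑ i ∈ insert a s, w i * X i ω = T ω + c * Y ω := fun ω => by
      rw [Finset.sum_insert ha, hTdef]; ring
    simp only [sum_eq', wsum_eq]
    exact ⟨memN, meanN, sec, four⟩

lemma aux_memℒp_of_map {ν : Measure ℝ} {f : Ω' → ℝ} (hf : Measurable f)
    (h : Measure.map f μ = ν) (hmom4 : MemLp id (4 : ℝ≥0∞) ν) : MemLp f 4 μ := by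
  have h' : MemLp id (4 : ℝ≥0∞) (Measure.map f μ) := h ▸ hmom4
  have := (memLp_map_measure_iff aestronglyMeasurable_id hf.aemeasurable).1 h'
  simpa [Function.comp] using this

lemma aux_integral_of_map {ν : Measure ℝ} {f : Ω' → ℝ} (hf : Measurable f)
    (h : Measure.map f μ = ν) {φ : ℝ → ℝ} (hφ : Measurable φ) :
    ∫ ω, φ (f ω) ∂μ = ∫ x, φ x ∂ν := by
  rw [← h, integral_map hf.aemeasurable hφ.aestronglyMeasurable]

lemma aux_map_pair [IsProbabilityMeasure μ] {ν ν' : Measure ℝ}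
    [IsFiniteMeasure ν] [IsFiniteMeasure ν']
    {f g : Ω' → ℝ} (hf : Measurable f) (hg : Measurable g)
    (hfg : IndepFun f g μ) (h1 : Measure.map f μ = ν) (h2 : Measure.map g μ = ν') :
    Measure.map (fun ω => (f ω, g ω)) μ = ν.prod ν' := by
  have := (indepFun_iff_map_prod_eq_prod_map_map hf.aemeasurable hg.aemeasurable).1 hfg
  rw [this, h1, h2]

lemma aux_integral_pair [IsProbabilityMeasure μ] {ν ν' : Measure ℝ}
    [IsFiniteMeasure ν] [IsFiniteMeasure ν']
    {f g : Ω' → ℝ} (hf : Measurable f) (hg : Measurable g)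
    (hfg : IndepFun f g μ) (h1 : Measure.map f μ = ν) (h2 : Measure.map g μ = ν')
    {φ : ℝ × ℝ → ℝ} (hφ : Measurable φ) :
    ∫ ω, φ (f ω, g ω) ∂μ = ∫ p, φ p ∂(ν.prod ν') := by
  rw [← aux_map_pair hf hg hfg h1 h2,
    integral_map (hf.prodMk hg).aemeasurable hφ.aestronglyMeasurable]

/-- Independence of a weighted sum of the differences from a single difference. -/
lemma indep_sum_single (ε ε' : (N : ℕ) → ℤ → Ω' → Fin N → ℝ) {N : ℕ}
    (hmeas : ∀ N t, Measurable (ε N t)) (hmeas' : ∀ N t, Measurable (ε' N t))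
    (hindep : iIndepFun
      (fun p : (ℤ ⊕ ℤ) × Fin N => fun ω => Sum.elim (ε N) (ε' N) p.1 ω p.2) μ)
    (σ : ℤ) (w : Fin N → ℝ) :
    ∀ (s : Finset (Fin N)), ∀ a ∉ s,
      IndepFun (fun ω => ∑ i ∈ s, w i * (ε N σ ω i - ε' N σ ω i))
        (fun ω => ε N σ ω a - ε' N σ ω a) μ := by
  classical
  set F : (ℤ ⊕ ℤ) × Fin N → Ω' → ℝ :=
    fun p => fun ω => Sum.elim (ε N) (ε' N) p.1 ω p.2 with hF
  have hFmeas : ∀ p, Measurable (F p) := by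
    rintro ⟨(z | z), i⟩
    · exact (measurable_pi_apply i).comp (hmeas N z)
    · exact (measurable_pi_apply i).comp (hmeas' N z)
  intro s a ha
  set S : Finset ((ℤ ⊕ ℤ) × Fin N) :=
    s.image (fun i => ((Sum.inl σ : ℤ ⊕ ℤ), i)) ∪ s.image (fun i => ((Sum.inr σ : ℤ ⊕ ℤ), i))
    with hS
  set T : Finset ((ℤ ⊕ ℤ) × Fin N) :=
    {((Sum.inl σ : ℤ ⊕ ℤ), a), ((Sum.inr σ : ℤ ⊕ ℤ), a)} with hT
  have hmemT1 : ((Sum.inl σ : ℤ ⊕ ℤ), a) ∈ T := by simp [hT]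
  have hmemT2 : ((Sum.inr σ : ℤ ⊕ ℤ), a) ∈ T := by simp [hT]
  have hdisj : Disjoint S T := by
    rw [Finset.disjoint_left]
    intro p hp hpT
    have hps : p.2 ∈ s := by
      rcases Finset.mem_union.1 hp with h | h <;>
        · rcases Finset.mem_image.1 h with ⟨i, hi, rfl⟩
          exact hi
    have hpa : p.2 = a := by
      rcases Finset.mem_insert.1 hpT with h | h
      · rw [h]
      · rw [Finset.mem_singleton.1 h]
    exact ha (hpa ▸ hps)
  have base := hindep.indepFun_finset S T hdisj hFmeas
  have hmem1 : ∀ i ∈ s, ((Sum.inl σ : ℤ ⊕ ℤ), i) ∈ S := fun i hi =>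
    Finset.mem_union_left _ (Finset.mem_image_of_mem _ hi)
  have hmem2 : ∀ i ∈ s, ((Sum.inr σ : ℤ ⊕ ℤ), i) ∈ S := fun i hi =>
    Finset.mem_union_right _ (Finset.mem_image_of_mem _ hi)
  set φ : (∀ p : ↥S, ℝ) → ℝ := fun v =>
    ∑ i ∈ s.attach, w i.1 * (v ⟨(Sum.inl σ, i.1), hmem1 i.1 i.2⟩
      - v ⟨(Sum.inr σ, i.1), hmem2 i.1 i.2⟩) with hφdef
  have hφ : Measurable φ := by
    apply Finset.measurable_sum
    intro i _
    exact ((measurable_pi_apply (⟨(Sum.inl σ, i.1), hmem1 i.1 i.2⟩ : ↥S)).sub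
      (measurable_pi_apply (⟨(Sum.inr σ, i.1), hmem2 i.1 i.2⟩ : ↥S))).const_mul _
  set ψ : (∀ p : ↥T, ℝ) → ℝ := fun v =>
    v ⟨((Sum.inl σ : ℤ ⊕ ℤ), a), hmemT1⟩ - v ⟨((Sum.inr σ : ℤ ⊕ ℤ), a), hmemT2⟩ with hψdef
  have hψ : Measurable ψ :=
    (measurable_pi_apply (⟨((Sum.inl σ : ℤ ⊕ ℤ), a), hmemT1⟩ : ↥T)).sub
      (measurable_pi_apply (⟨((Sum.inr σ : ℤ ⊕ ℤ), a), hmemT2⟩ : ↥T))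
  have hcomp := base.comp hφ hψ
  have e₁ : (φ ∘ fun ω (p : ↥S) => F p.1 ω)
      = fun ω => ∑ i ∈ s, w i * (ε N σ ω i - ε' N σ ω i) := by
    funext ω
    show ∑ i ∈ s.attach, w i.1 * (F (Sum.inl σ, i.1) ω - F (Sum.inr σ, i.1) ω) = _
    rw [← Finset.sum_attach s (fun i => w i * (ε N σ ω i - ε' N σ ω i))]
    rfl
  have e₂ : (ψ ∘ fun ω (p : ↥T) => F p.1 ω)
      = fun ω => ε N σ ω a - ε' N σ ω a := by
    funext ω; rfl
  rw [e₁, e₂] at hcomp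
  exact hcomp

lemma aux_eLpNorm_le_of_pow4 [IsProbabilityMeasure μ] {f : Ω' → ℝ}
    (hfint : Integrable (fun ω => f ω ^ 4) μ) {c : ℝ} (hc : 0 ≤ c)
    (hint : ∫ ω, f ω ^ 4 ∂μ ≤ c ^ 4) : eLpNorm f 4 μ ≤ ENNReal.ofReal c := by
  rw [eLpNorm_eq_lintegral_rpow_enorm_toReal (by norm_num) (by norm_num)]
  have hnn : 0 ≤ᵐ[μ] fun ω => f ω ^ 4 :=
    Filter.Eventually.of_forall fun ω => by positivity
  have h1 : ∫⁻ x, ‖f x‖ₑ ^ ((4:ℝ≥0∞).toReal) ∂μ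
      = ENNReal.ofReal (∫ ω, f ω ^ 4 ∂μ) := by
    rw [ofReal_integral_eq_lintegral_ofReal hfint hnn]
    apply lintegral_congr
    intro x
    rw [Real.enorm_eq_ofReal_abs, show ((4:ℝ≥0∞)).toReal = ((4:ℕ):ℝ) by norm_num,
      ENNReal.rpow_natCast, ← ENNReal.ofReal_pow (abs_nonneg _), pow_abs,
      abs_of_nonneg (by positivity : (0:ℝ) ≤ f x ^ 4)]
  rw [h1]
  calc (ENNReal.ofReal (∫ ω, f ω ^ 4 ∂μ)) ^ (1 / (4:ℝ≥0∞).toReal)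
      ≤ (ENNReal.ofReal (c^4)) ^ (1 / (4:ℝ≥0∞).toReal) := by
        apply ENNReal.rpow_le_rpow (ENNReal.ofReal_le_ofReal hint) (by norm_num)
    _ = ENNReal.ofReal ((c^4) ^ ((1:ℝ)/4)) := by
        rw [show (1 / (4:ℝ≥0∞).toReal) = ((1:ℝ)/4) by norm_num,
          ENNReal.ofReal_rpow_of_nonneg (by positivity) (by norm_num)]
    _ = ENNReal.ofReal c := by
        congr 1
        rw [← Real.rpow_natCast c 4, ← Real.rpow_mul hc]
        norm_num

lemma aux_geom_tail {ρ : ℝ} (hρ0 : 0 < ρ) (hρ1 : ρ < 1) (c : ℝ) (hc : 0 ≤ c) (t n : ℕ) :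
    ∑ j ∈ Finset.range n, (if j < t then 0 else c * ρ^j) ≤ c * (ρ^t / (1-ρ)) := by
  classical
  have h1 : ∑ j ∈ Finset.range n, (if j < t then (0:ℝ) else c * ρ^j)
      = ∑ j ∈ (Finset.range n).filter (fun j => ¬ j < t), c * ρ^j := by
    rw [Finset.sum_ite]
    simp
  rw [h1]
  have hsub : (Finset.range n).filter (fun j => ¬ j < t) ⊆ Finset.Ico t (max n t) := by
    intro j hj
    simp only [Finset.mem_filter, Finset.mem_range, not_lt] at hj
    exact Finset.mem_Ico.2 ⟨hj.2, lt_max_of_lt_left hj.1⟩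
  calc ∑ j ∈ (Finset.range n).filter (fun j => ¬ j < t), c * ρ^j
      ≤ ∑ j ∈ Finset.Ico t (max n t), c * ρ^j := by
        apply Finset.sum_le_sum_of_subset_of_nonneg hsub
        intro j _ _; positivity
    _ = ∑ k ∈ Finset.range (max n t - t), c * ρ^(t + k) := by
        rw [Finset.sum_Ico_eq_sum_range]
    _ = (c * ρ^t) * ∑ k ∈ Finset.range (max n t - t), ρ^k := by
        rw [Finset.mul_sum]
        apply Finset.sum_congr rfl
        intro k _
        rw [pow_add]; ring
    _ ≤ (c * ρ^t) * (1-ρ)⁻¹ := by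
        apply mul_le_mul_of_nonneg_left _ (by positivity)
        calc ∑ k ∈ Finset.range (max n t - t), ρ^k
            ≤ ∑' k : ℕ, ρ^k := Summable.sum_le_tsum _ (fun k _ => by positivity)
              (summable_geometric_of_lt_one hρ0.le hρ1)
          _ = (1-ρ)⁻¹ := tsum_geometric_of_lt_one hρ0.le hρ1
    _ = c * (ρ^t / (1-ρ)) := by ring

end Aux

/-- Example 1, part 1: under the operator-norm decay `‖B_j‖ ≤ C₀ρ^j` and
`E|ε₁₁|⁴ < ∞`, one has `‖Ū_t − Ū*_t‖_{L⁴} ≤ C ρ^t` for all `N ≥ 1`, `t ≥ 0`; hence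
`∑_t t² ‖Ū_t − Ū*_t‖_{L⁴} < ∞` uniformly in `N`, i.e. Assumption 1 holds with `δ = 4`. -/

theorem statement16 {Ω : Type*} [MeasurableSpace Ω] (μ : Measure Ω) [IsProbabilityMeasure μ]
    (ν : Measure ℝ) [IsProbabilityMeasure ν]
    (ε ε' : (N : ℕ) → ℤ → Ω → Fin N → ℝ)
    (B : (N : ℕ) → ℕ → Matrix (Fin N) (Fin N) ℝ)
    (C₀ ρ : ℝ) (hC₀ : 0 < C₀) (hρ0 : 0 < ρ) (hρ1 : ρ < 1)
    (hmeas : ∀ N t, Measurable (ε N t)) (hmeas' : ∀ N t, Measurable (ε' N t))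
    (hindep : ∀ N : ℕ, iIndepFun
      (fun p : (ℤ ⊕ ℤ) × Fin N => fun ω => Sum.elim (ε N) (ε' N) p.1 ω p.2) μ)
    (hlaw : ∀ N t i, Measure.map (fun ω => ε N t ω i) μ = ν)
    (hlaw' : ∀ N t i, Measure.map (fun ω => ε' N t ω i) μ = ν)
    (hmean : ∫ x, x ∂ν = 0)
    (hmom4 : MemLp id (4 : ℝ≥0∞) ν)
    (hB_op : ∀ N j, opNorm (B N j) ≤ C₀ * ρ ^ j)
    (hsum : ∀ N t i, ∀ᵐ ω ∂μ,
      Summable (fun j : ℕ => (B N j).mulVec (ε N (t - (j : ℤ)) ω) i))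
    (hsumStar : ∀ N t i, ∀ᵐ ω ∂μ,
      Summable (fun j : ℕ => (B N j).mulVec
        (fun l => if 1 ≤ t - (j : ℤ) then ε N (t - (j : ℤ)) ω l
          else ε' N (t - (j : ℤ)) ω l) i)) :
    ∃ C : ℝ, 0 < C ∧
      (∀ N : ℕ, 1 ≤ N → ∀ t : ℕ,
        eLpNorm (fun ω => UbarLin ε B N t ω - UbarLinStar ε ε' B N t ω) (4 : ℝ≥0∞) μ
          ≤ ENNReal.ofReal (C * ρ ^ t)) ∧
      ∃ M : ℝ, ∀ N : ℕ, 1 ≤ N →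
        ∑' t : ℕ, ((t : ℝ≥0∞)) ^ 2 *
            eLpNorm (fun ω => UbarLin ε B N t ω - UbarLinStar ε ε' B N t ω) (4 : ℝ≥0∞) μ
          ≤ ENNReal.ofReal M := by
  classical
  have h1ρ : 0 < 1 - ρ := by linarith
  -- the common law of the differences
  have hfstmap : Measure.map Prod.fst (ν.prod ν) = ν := Measure.fst_prod
  have hsndmap : Measure.map Prod.snd (ν.prod ν) = ν := Measure.snd_prod
  have hZmem : MemLp (fun p : ℝ × ℝ => p.1 - p.2) 4 (ν.prod ν) :=
    (aux_memℒp_of_map measurable_fst hfstmap hmom4).sub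
      (aux_memℒp_of_map measurable_snd hsndmap hmom4)
  set m₂ : ℝ := ∫ p : ℝ × ℝ, (p.1 - p.2)^2 ∂(ν.prod ν) with hm₂def
  set m₄ : ℝ := ∫ p : ℝ × ℝ, (p.1 - p.2)^4 ∂(ν.prod ν) with hm₄def
  have hm2 : 0 ≤ m₂ := integral_nonneg fun p => sq_nonneg _
  have hm4nn : 0 ≤ m₄ := integral_nonneg fun p => by positivity
  have hi2 : Integrable (fun p : ℝ × ℝ => (p.1 - p.2)^2) (ν.prod ν) :=
    aux_integrable_pow hZmem 2 (by norm_num)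
  have hi4 : Integrable (fun p : ℝ × ℝ => (p.1 - p.2)^4) (ν.prod ν) :=
    aux_integrable_pow hZmem 4 (by norm_num)
  have hm24 : m₂^2 ≤ m₄ := by
    have h0 : 0 ≤ ∫ p : ℝ × ℝ, ((p.1 - p.2)^2 - m₂)^2 ∂(ν.prod ν) :=
      integral_nonneg fun p => sq_nonneg _
    have hexp : ∫ p : ℝ × ℝ, ((p.1 - p.2)^2 - m₂)^2 ∂(ν.prod ν) = m₄ - m₂^2 := by
      have e : ∀ p : ℝ × ℝ, ((p.1 - p.2)^2 - m₂)^2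
          = (p.1 - p.2)^4 - (2*m₂) * ((p.1 - p.2)^2) + m₂^2 := fun p => by ring
      simp only [e]
      have IA : Integrable (fun p : ℝ × ℝ => (p.1 - p.2)^4 - (2*m₂) * ((p.1 - p.2)^2))
          (ν.prod ν) := hi4.sub (hi2.const_mul _)
      rw [integral_add IA (integrable_const _), integral_sub hi4 (hi2.const_mul _),
        integral_const_mul, integral_const]
      simp [← hm₂def, ← hm₄def]
      ring
    linarith
  -- the constants
  set c₄ : ℝ := 1 + 3 * m₄ with hc₄def
  have hc₄pos : 0 < c₄ := by positivity
  have h3m₄ : 3 * m₄ ≤ c₄^4 := by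
    rw [hc₄def]
    nlinarith [hm4nn, pow_nonneg hm4nn 2, pow_nonneg hm4nn 3, pow_nonneg hm4nn 4]
  set C : ℝ := c₄ * C₀ / (1 - ρ) with hCdef
  have hC : 0 < C := by positivity
  -- main per-(N,t) estimate
  have main : ∀ N : ℕ, 1 ≤ N → ∀ t : ℕ,
      eLpNorm (fun ω => UbarLin ε B N t ω - UbarLinStar ε ε' B N t ω) (4 : ℝ≥0∞) μ
        ≤ ENNReal.ofReal (C * ρ ^ t) := by
    intro N hN t
    have hNpos : (0:ℝ) < N := by exact_mod_cast hN
    have hsqpos : (0:ℝ) < Real.sqrt N := Real.sqrt_pos.2 hNpos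
    -- the one-lag pieces
    set g : ℕ → Ω → ℝ := fun j ω =>
      (∑ i, (B N j).mulVec (ε N ((t:ℤ) - (j:ℤ)) ω) i) / Real.sqrt N with hgdef
    set g' : ℕ → Ω → ℝ := fun j ω =>
      (∑ i, (B N j).mulVec
        (fun l => if 1 ≤ (t:ℤ) - (j:ℤ) then ε N ((t:ℤ) - (j:ℤ)) ω l
          else ε' N ((t:ℤ) - (j:ℤ)) ω l) i) / Real.sqrt N with hg'def
    set a : ℕ → Ω → ℝ := fun j ω => g j ω - g' j ω with hadef
    -- measurability
    have hmeasg : ∀ j, Measurable (g j) := by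
      intro j
      apply Measurable.div_const
      apply Finset.measurable_sum
      intro i _
      simp only [Matrix.mulVec, dotProduct]
      apply Finset.measurable_sum
      intro k _
      exact ((measurable_pi_apply k).comp (hmeas N _)).const_mul _
    have hmeasg' : ∀ j, Measurable (g' j) := by
      intro j
      apply Measurable.div_const
      apply Finset.measurable_sum
      intro i _
      simp only [Matrix.mulVec, dotProduct]
      apply Finset.measurable_sum
      intro k _
      by_cases hcond : 1 ≤ (t:ℤ) - (j:ℤ)
      · simp only [if_pos hcond]
        exact ((measurable_pi_apply k).comp (hmeas N _)).const_mul _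
      · simp only [if_neg hcond]
        exact ((measurable_pi_apply k).comp (hmeas' N _)).const_mul _
    have hmeasa : ∀ j, Measurable (a j) := fun j => (hmeasg j).sub (hmeasg' j)
    -- a.e. convergence of partial sums
    have hae : ∀ᵐ ω ∂μ, Tendsto (fun n => ∑ j ∈ Finset.range n, a j ω) atTop
        (𝓝 (UbarLin ε B N t ω - UbarLinStar ε ε' B N t ω)) := by
      have h1 : ∀ᵐ ω ∂μ, ∀ i : Fin N,
          Summable (fun j : ℕ => (B N j).mulVec (ε N ((t:ℤ) - (j:ℤ)) ω) i) :=
        (ae_all_iff).2 fun i => hsum N t i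
      have h2 : ∀ᵐ ω ∂μ, ∀ i : Fin N,
          Summable (fun j : ℕ => (B N j).mulVec
            (fun l => if 1 ≤ (t:ℤ) - (j:ℤ) then ε N ((t:ℤ) - (j:ℤ)) ω l
              else ε' N ((t:ℤ) - (j:ℤ)) ω l) i) :=
        (ae_all_iff).2 fun i => hsumStar N t i
      filter_upwards [h1, h2] with ω h1 h2
      have hgsum : Summable (fun j => g j ω) := by
        have : Summable (fun j : ℕ => ∑ i, (B N j).mulVec (ε N ((t:ℤ) - (j:ℤ)) ω) i) :=
          summable_sum fun i _ => h1 i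
        exact this.div_const _
      have hg'sum : Summable (fun j => g' j ω) := by
        have : Summable (fun j : ℕ => ∑ i, (B N j).mulVec
            (fun l => if 1 ≤ (t:ℤ) - (j:ℤ) then ε N ((t:ℤ) - (j:ℤ)) ω l
              else ε' N ((t:ℤ) - (j:ℤ)) ω l) i) :=
          summable_sum fun i _ => h2 i
        exact this.div_const _
      have hU : UbarLin ε B N t ω = ∑' j : ℕ, g j ω := by
        rw [UbarLin]
        simp only [uCoord, hgdef]
        rw [← Summable.tsum_finsetSum (fun i _ => h1 i), tsum_div_const]
      have hU' : UbarLinStar ε ε' B N t ω = ∑' j : ℕ, g' j ω := by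
        rw [UbarLinStar]
        simp only [uCoordStar, hg'def]
        rw [← Summable.tsum_finsetSum (fun i _ => h2 i), tsum_div_const]
      have hhs : HasSum (fun j => a j ω)
          (UbarLin ε B N t ω - UbarLinStar ε ε' B N t ω) := by
        rw [hU, hU', ← Summable.tsum_sub hgsum hg'sum]
        exact (hgsum.sub hg'sum).hasSum
      exact hhs.tendsto_sum_nat
    -- pointwise eLpNorm bound on each piece
    have hj : ∀ j : ℕ, eLpNorm (a j) (4 : ℝ≥0∞) μ
        ≤ ENNReal.ofReal (if j < t then 0 else c₄ * (C₀ * ρ^j)) := by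
      intro j
      by_cases hcase : j < t
      · have hcond : 1 ≤ (t:ℤ) - (j:ℤ) := by omega
        have : a j = fun _ => (0:ℝ) := by
          funext ω
          simp only [hadef, hgdef, hg'def, if_pos hcond]
          ring
        rw [this]
        simp only [if_pos hcase]
        rw [show (fun _ : Ω => (0:ℝ)) = (0 : Ω → ℝ) from rfl, eLpNorm_zero]
        exact zero_le
      · have hcond : ¬ (1 ≤ (t:ℤ) - (j:ℤ)) := by omega
        set σ : ℤ := (t:ℤ) - (j:ℤ) with hσdef
        set w : Fin N → ℝ := fun k => (∑ i, B N j i k) / Real.sqrt N with hwdef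
        set X : Fin N → Ω → ℝ := fun k ω => ε N σ ω k - ε' N σ ω k with hXdef
        have ha_eq : a j = fun ω => ∑ k, w k * X k ω := by
          funext ω
          simp only [hadef, hgdef, hg'def, if_neg hcond, hwdef, hXdef]
          rw [div_sub_div_same]
          simp only [Matrix.mulVec, dotProduct]
          rw [← Finset.sum_sub_distrib]
          rw [Finset.sum_congr rfl (fun i _ => (Finset.sum_sub_distrib _ _).symm)]
          rw [Finset.sum_comm]
          rw [Finset.sum_div]
          apply Finset.sum_congr rfl
          intro k _
          rw [Finset.sum_congr rfl (fun i _ => (mul_sub (B N j i k) _ _).symm)]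
          rw [← Finset.sum_mul, mul_div_right_comm]
          rw [if_neg (show ¬ (1 ≤ (t:ℤ) - (j:ℤ)) by omega)]
        -- hypotheses for the moment bound
        have hXmeas : ∀ k, Measurable (X k) := fun k =>
          ((measurable_pi_apply k).comp (hmeas N σ)).sub
            ((measurable_pi_apply k).comp (hmeas' N σ))
        have hεmeas : ∀ k, Measurable (fun ω => ε N σ ω k) := fun k =>
          (measurable_pi_apply k).comp (hmeas N σ)
        have hε'meas : ∀ k, Measurable (fun ω => ε' N σ ω k) := fun k =>
          (measurable_pi_apply k).comp (hmeas' N σ)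
        have hεmem : ∀ k, MemLp (fun ω => ε N σ ω k) 4 μ := fun k =>
          aux_memℒp_of_map (hεmeas k) (hlaw N σ k) hmom4
        have hε'mem : ∀ k, MemLp (fun ω => ε' N σ ω k) 4 μ := fun k =>
          aux_memℒp_of_map (hε'meas k) (hlaw' N σ k) hmom4
        have hXmem : ∀ k, MemLp (X k) 4 μ := fun k => (hεmem k).sub (hε'mem k)
        have hXmean : ∀ k, ∫ ω, X k ω ∂μ = 0 := by
          intro k
          have he : ∫ ω, ε N σ ω k ∂μ = 0 := by
            have := aux_integral_of_map (φ := fun x : ℝ => x) (hεmeas k) (hlaw N σ k)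
              measurable_id
            rw [this, hmean]
          have he' : ∫ ω, ε' N σ ω k ∂μ = 0 := by
            have := aux_integral_of_map (φ := fun x : ℝ => x) (hε'meas k) (hlaw' N σ k)
              measurable_id
            rw [this, hmean]
          rw [hXdef]
          rw [integral_sub ((hεmem k).integrable (by norm_num))
            ((hε'mem k).integrable (by norm_num)), he, he']
          ring
        have hpairindep : ∀ k : Fin N,
            IndepFun (fun ω => ε N σ ω k) (fun ω => ε' N σ ω k) μ := by
          intro k
          exact (hindep N).indepFun
            (show ((Sum.inl σ : ℤ ⊕ ℤ), k) ≠ ((Sum.inr σ : ℤ ⊕ ℤ), k) by simp)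
        have hX2 : ∀ k, ∫ ω, (X k ω)^2 ∂μ = m₂ := by
          intro k
          exact aux_integral_pair (φ := fun p : ℝ × ℝ => (p.1 - p.2)^2)
            (hεmeas k) (hε'meas k) (hpairindep k) (hlaw N σ k) (hlaw' N σ k)
            ((measurable_fst.sub measurable_snd).pow_const 2)
        have hX4 : ∀ k, ∫ ω, (X k ω)^4 ∂μ ≤ m₄ := by
          intro k
          exact le_of_eq (aux_integral_pair (φ := fun p : ℝ × ℝ => (p.1 - p.2)^4)
            (hεmeas k) (hε'meas k) (hpairindep k) (hlaw N σ k) (hlaw' N σ k)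
            ((measurable_fst.sub measurable_snd).pow_const 4))
        have hXindep : ∀ (s : Finset (Fin N)), ∀ b ∉ s,
            IndepFun (fun ω => ∑ i ∈ s, w i * X i ω) (X b) μ :=
          indep_sum_single ε ε' hmeas hmeas' (hindep N) σ w
        obtain ⟨hMem, -, -, h4b⟩ := moment_bound X w m₂ m₄ hm2 hm24 hXmeas hXmem
          hXmean hX2 hX4 hXindep Finset.univ
        have hW : ∑ k, (w k)^2 ≤ (C₀ * ρ^j)^2 := by
          calc ∑ k, (w k)^2 ≤ (opNorm (B N j))^2 := wsum_le hN (B N j)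
            _ ≤ (C₀ * ρ^j)^2 := pow_le_pow_left₀ (opNorm_nonneg _) (hB_op N j) 2
        have hWnn : 0 ≤ ∑ k, (w k)^2 := Finset.sum_nonneg fun k _ => sq_nonneg _
        have hCρnn : 0 ≤ C₀ * ρ^j := by positivity
        have hbound4 : ∫ ω, (∑ k, w k * X k ω)^4 ∂μ ≤ (c₄ * (C₀ * ρ^j))^4 := by
          calc ∫ ω, (∑ k, w k * X k ω)^4 ∂μ ≤ 3 * m₄ * (∑ k, (w k)^2)^2 := h4b
            _ ≤ 3 * m₄ * ((C₀ * ρ^j)^2)^2 := by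
                apply mul_le_mul_of_nonneg_left _ (by positivity)
                exact pow_le_pow_left₀ hWnn hW 2
            _ = (3 * m₄) * (C₀ * ρ^j)^4 := by ring
            _ ≤ c₄^4 * (C₀ * ρ^j)^4 := by
                apply mul_le_mul_of_nonneg_right h3m₄ (by positivity)
            _ = (c₄ * (C₀ * ρ^j))^4 := by ring
        have hMem' : MemLp (a j) 4 μ := by rw [ha_eq]; exact hMem
        have hfint : Integrable (fun ω => a j ω ^ 4) μ :=
          aux_integrable_pow hMem' 4 (by norm_num)
        have hle : eLpNorm (a j) (4 : ℝ≥0∞) μ ≤ ENNReal.ofReal (c₄ * (C₀ * ρ^j)) := by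
          apply aux_eLpNorm_le_of_pow4 hfint (by positivity)
          calc ∫ ω, a j ω ^ 4 ∂μ = ∫ ω, (∑ k, w k * X k ω)^4 ∂μ := by rw [ha_eq]
            _ ≤ (c₄ * (C₀ * ρ^j))^4 := hbound4
        simpa only [if_neg hcase] using hle
    -- combine
    have hFmeasn : ∀ n : ℕ, AEStronglyMeasurable
        (fun ω => ∑ j ∈ Finset.range n, a j ω) μ := fun n =>
      (Finset.measurable_sum _ fun j _ => hmeasa j).aestronglyMeasurable
    have hpart : ∀ n : ℕ, eLpNorm (fun ω => ∑ j ∈ Finset.range n, a j ω) (4 : ℝ≥0∞) μ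
        ≤ ENNReal.ofReal (C * ρ^t) := by
      intro n
      have hfun : (fun ω => ∑ j ∈ Finset.range n, a j ω)
          = ∑ j ∈ Finset.range n, a j := by
        funext ω; simp
      calc eLpNorm (fun ω => ∑ j ∈ Finset.range n, a j ω) (4 : ℝ≥0∞) μ
          = eLpNorm (∑ j ∈ Finset.range n, a j) (4 : ℝ≥0∞) μ := by rw [hfun]
        _ ≤ ∑ j ∈ Finset.range n, eLpNorm (a j) (4 : ℝ≥0∞) μ :=
            eLpNorm_sum_le (fun j _ => (hmeasa j).aestronglyMeasurable) (by norm_num)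
        _ ≤ ∑ j ∈ Finset.range n, ENNReal.ofReal (if j < t then 0 else c₄ * (C₀ * ρ^j)) :=
            Finset.sum_le_sum fun j _ => hj j
        _ = ENNReal.ofReal (∑ j ∈ Finset.range n, (if j < t then 0 else c₄ * (C₀ * ρ^j))) :=
            (ENNReal.ofReal_sum_of_nonneg fun j _ => by positivity).symm
        _ ≤ ENNReal.ofReal (C * ρ^t) := by
            apply ENNReal.ofReal_le_ofReal
            have h := aux_geom_tail hρ0 hρ1 (c₄ * C₀) (by positivity) t n
            have heq : ∀ j : ℕ, (if j < t then (0:ℝ) else c₄ * (C₀ * ρ^j))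
                = (if j < t then (0:ℝ) else (c₄ * C₀) * ρ^j) := by
              intro j; split_ifs <;> ring
            rw [Finset.sum_congr rfl fun j _ => heq j]
            calc ∑ j ∈ Finset.range n, (if j < t then (0:ℝ) else (c₄ * C₀) * ρ^j)
                ≤ (c₄ * C₀) * (ρ^t / (1-ρ)) := h
              _ = C * ρ^t := by rw [hCdef]; field_simp
    calc eLpNorm (fun ω => UbarLin ε B N t ω - UbarLinStar ε ε' B N t ω) (4 : ℝ≥0∞) μ
        ≤ atTop.liminf fun n => eLpNorm (fun ω => ∑ j ∈ Finset.range n, a j ω) (4:ℝ≥0∞) μ :=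
          Lp.eLpNorm_lim_le_liminf_eLpNorm hFmeasn _ hae
      _ ≤ atTop.liminf (fun _ : ℕ => ENNReal.ofReal (C * ρ^t)) :=
          Filter.liminf_le_liminf (Filter.Eventually.of_forall hpart)
      _ = ENNReal.ofReal (C * ρ^t) := Filter.liminf_const _
  refine ⟨C, hC, main, ?_⟩
  -- the summed bound
  have hsummable : Summable (fun t : ℕ => (t:ℝ)^2 * (C * ρ^t)) := by
    have h := summable_pow_mul_geometric_of_norm_lt_one (R := ℝ) 2
      (r := ρ) (by rw [Real.norm_eq_abs, abs_of_pos hρ0]; exact hρ1)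
    exact (h.mul_left C).congr fun n => by ring
  refine ⟨∑' t : ℕ, ((t:ℝ)^2 * (C * ρ^t)), fun N hN => ?_⟩
  calc ∑' t : ℕ, ((t : ℝ≥0∞))^2 *
        eLpNorm (fun ω => UbarLin ε B N t ω - UbarLinStar ε ε' B N t ω) (4 : ℝ≥0∞) μ
      ≤ ∑' t : ℕ, ENNReal.ofReal ((t:ℝ)^2 * (C * ρ^t)) := by
        apply ENNReal.tsum_le_tsum
        intro t
        calc ((t : ℝ≥0∞))^2 *
              eLpNorm (fun ω => UbarLin ε B N t ω - UbarLinStar ε ε' B N t ω) (4:ℝ≥0∞) μ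
            ≤ ((t : ℝ≥0∞))^2 * ENNReal.ofReal (C * ρ^t) :=
              mul_le_mul_right (main N hN t) _
          _ = ENNReal.ofReal ((t:ℝ)^2 * (C * ρ^t)) := by
              have hcast : ((t : ℝ≥0∞))^2 = ENNReal.ofReal ((t:ℝ)^2) := by
                rw [ENNReal.ofReal_pow (by positivity), ENNReal.ofReal_natCast]
              rw [hcast, ← ENNReal.ofReal_mul (by positivity : (0:ℝ) ≤ (t:ℝ)^2)]
    _ ≤ ENNReal.ofReal (∑' t : ℕ, ((t:ℝ)^2 * (C * ρ^t))) := by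
        rw [ENNReal.ofReal_tsum_of_nonneg (fun t => by positivity) hsummable]

end PanelPaper
end

section
/- (Example 1, part 2, covariance summability: Bai's Assumption C(ii).) Assume the column-sum condition |B^{(N)}_j|₁ ≤ C₀ρ^j for all j ≥ 0 and E[ε₁₁²] < ∞. Then there exists a constant C (depending only on C₀, ρ and E[ε₁₁²]) such that for all N ≥ 1 and T ≥ 1: (1/(N·T)) · ∑_{i=1}^N ∑_{j=1}^N ∑_{t=1}^T ∑_{s=1}^T |E[u_{it} u_{js}]| ≤ C. -/
open MeasureTheory ProbabilityTheory Filter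
open scoped ENNReal NNReal Topology Classical

namespace PanelPaper

variable {Ω : Type*} [MeasurableSpace Ω]

set_option linter.unusedSectionVars false

lemma line_tsum_le {ρ : ℝ} (hρ0 : 0 ≤ ρ) (hρ1 : ρ < 1) (d : ℤ) :
    ∑' p : ℕ × ℕ, (if ((p.1 : ℤ) - p.2 = d) then ρ ^ (p.1 + p.2) else 0)
      ≤ ρ ^ d.natAbs * (1 - ρ ^ 2)⁻¹ := by
  set f : ℕ × ℕ → ℝ := fun p => if ((p.1 : ℤ) - p.2 = d) then ρ ^ (p.1 + p.2) else 0 with hf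
  set ι : ℕ → ℕ × ℕ := fun m => (m + d.toNat, m + (-d).toNat) with hι
  have hinj : Function.Injective ι := by
    intro m m' h
    have h1 : m + d.toNat = m' + d.toNat := congrArg Prod.fst h
    omega
  have hsupp : Function.support f ⊆ Set.range ι := by
    intro p hp
    have hcond : (p.1 : ℤ) - p.2 = d := by
      by_contra hc; simp [hf, hc] at hp
    refine ⟨min p.1 p.2, ?_⟩
    simp only [hι, Prod.ext_iff]
    omega
  have key : ∑' m : ℕ, f (ι m) = ρ ^ d.natAbs * (1 - ρ ^ 2)⁻¹ := by
    have : ∀ m : ℕ, f (ι m) = ρ ^ d.natAbs * (ρ ^ 2) ^ m := by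
      intro m
      have hc : ((m + d.toNat : ℕ) : ℤ) - (m + (-d).toNat : ℕ) = d := by
        push_cast; omega
      have hexp : (m + d.toNat) + (m + (-d).toNat) = d.natAbs + 2 * m := by omega
      simp only [hf, hι, hc, if_pos]
      rw [hexp, pow_add, pow_mul]
    rw [tsum_congr this, tsum_mul_left, tsum_geometric_of_lt_one (by positivity) (by nlinarith)]
  rw [← hinj.tsum_eq hsupp, key]

lemma time_sum_le {ρ : ℝ} (hρ0 : 0 ≤ ρ) (hρ1 : ρ < 1) (T : ℕ) (t : ℤ) :
    ∑ s ∈ Finset.Icc (1 : ℤ) (T : ℤ), ρ ^ (t - s).natAbs ≤ 2 * (1 - ρ)⁻¹ := by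
  classical
  have hsummable : Summable (fun n : ℕ => ρ ^ n) := summable_geometric_of_lt_one hρ0 hρ1
  have htsum : ∑' n : ℕ, ρ ^ n = (1 - ρ)⁻¹ := tsum_geometric_of_lt_one hρ0 hρ1
  have hbound : ∀ A : Finset ℤ, Set.InjOn (fun s => (t - s).natAbs) A →
      ∑ s ∈ A, ρ ^ (t - s).natAbs ≤ (1 - ρ)⁻¹ := by
    intro A hA
    rw [show ∑ s ∈ A, ρ ^ (t - s).natAbs
        = ∑ n ∈ A.image (fun s => (t - s).natAbs), ρ ^ n from
      (Finset.sum_image (fun x hx y hy h => hA hx hy h)).symm]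
    calc ∑ n ∈ A.image (fun s => (t - s).natAbs), ρ ^ n ≤ ∑' n : ℕ, ρ ^ n :=
          Summable.sum_le_tsum _ (fun n _ => by positivity) hsummable
      _ = (1 - ρ)⁻¹ := htsum
  have hsplit := Finset.sum_filter_add_sum_filter_not (Finset.Icc (1 : ℤ) (T : ℤ))
    (fun s => s ≤ t) (fun s => ρ ^ (t - s).natAbs)
  rw [← hsplit, two_mul]
  gcongr
  · refine hbound _ ?_
    intro x hx y hy h
    simp only [Finset.coe_filter, Set.mem_setOf_eq, Finset.mem_Icc] at hx hy
    replace h : (t - x).natAbs = (t - y).natAbs := h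
    omega
  · refine hbound _ ?_
    intro x hx y hy h
    simp only [Finset.coe_filter, Set.mem_setOf_eq, Finset.mem_Icc] at hx hy
    replace h : (t - x).natAbs = (t - y).natAbs := h
    omega



lemma integrable_mul_of_memL2 {μ : Measure Ω} {f g : Ω → ℝ}
    (hf : MemLp f 2 μ) (hg : MemLp g 2 μ) :
    Integrable (fun ω => f ω * g ω) μ := by
  have hint : Integrable (fun ω => (f ω ^ 2 + g ω ^ 2) / 2) μ :=
    (hf.integrable_sq.add hg.integrable_sq).div_const 2
  refine hint.mono' (hf.1.mul hg.1) ?_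
  filter_upwards with ω
  rw [Real.norm_eq_abs, abs_mul]
  nlinarith [sq_abs (f ω), sq_abs (g ω), sq_nonneg (|f ω| - |g ω|), abs_nonneg (f ω), abs_nonneg (g ω)]

section MapMoments
variable {μ : Measure Ω} {ν : Measure ℝ} {f : Ω → ℝ}

lemma map_memL2 (hf : Measurable f) (hmap : Measure.map f μ = ν)
    (hmom2 : MemLp id (2 : ℝ≥0∞) ν) : MemLp f 2 μ := by
  have h := (memLp_map_measure_iff (g := id) aestronglyMeasurable_id hf.aemeasurable).mp
    (by rw [hmap]; exact hmom2)
  simpa [Function.comp] using h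

lemma map_mean (hf : Measurable f) (hmap : Measure.map f μ = ν)
    (hmean : ∫ x, x ∂ν = 0) : ∫ ω, f ω ∂μ = 0 := by
  have h : ∫ y, y ∂(Measure.map f μ) = ∫ ω, f ω ∂μ :=
    integral_map hf.aemeasurable aestronglyMeasurable_id
  rw [hmap] at h
  exact h.symm.trans hmean

lemma map_sq (hf : Measurable f) (hmap : Measure.map f μ = ν) :
    ∫ ω, f ω ^ 2 ∂μ = ∫ x, x ^ 2 ∂ν := by
  have h : ∫ y, y ^ 2 ∂(Measure.map f μ) = ∫ ω, f ω ^ 2 ∂μ :=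
    integral_map hf.aemeasurable (measurable_id.pow_const 2).aestronglyMeasurable
  rw [hmap] at h
  exact h.symm

lemma map_eLpNorm (hf : Measurable f) (hmap : Measure.map f μ = ν) :
    eLpNorm f 2 μ = eLpNorm id 2 ν := by
  have h : eLpNorm id 2 (Measure.map f μ) = eLpNorm (id ∘ f) 2 μ :=
    eLpNorm_map_measure (μ := μ) aestronglyMeasurable_id hf.aemeasurable
  rw [hmap] at h
  exact (h.trans rfl).symm

end MapMoments

/-- the `a`-th term of the MA(∞) expansion of `u_{it}` -/
noncomputable def Yc (ε : (N : ℕ) → ℤ → Ω → Fin N → ℝ)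
    (B : (N : ℕ) → ℕ → Matrix (Fin N) (Fin N) ℝ)
    (N : ℕ) (a : ℕ) (t : ℤ) (i : Fin N) (ω : Ω) : ℝ :=
  (B N a).mulVec (ε N (t - (a : ℤ)) ω) i

variable {μ : Measure Ω} [IsProbabilityMeasure μ] {ν : Measure ℝ} [IsProbabilityMeasure ν]
  {ε : (N : ℕ) → ℤ → Ω → Fin N → ℝ} {B : (N : ℕ) → ℕ → Matrix (Fin N) (Fin N) ℝ}

lemma Yc_eq_sum (N a t i ω) :
    Yc (Ω := Ω) ε B N a t i ω = ∑ k : Fin N, B N a i k * ε N (t - (a : ℤ)) ω k := by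
  simp [Yc, Matrix.mulVec, dotProduct]

lemma eps_meas (hmeas : ∀ N t, Measurable (ε N t)) (N : ℕ) (t : ℤ) (i : Fin N) :
    Measurable fun ω => ε N t ω i :=
  (measurable_pi_apply i).comp (hmeas N t)

lemma Yc_meas (hmeas : ∀ N t, Measurable (ε N t)) (N a t i) :
    Measurable (Yc (Ω := Ω) ε B N a t i) := by
  have : Yc (Ω := Ω) ε B N a t i
      = fun ω => ∑ k : Fin N, B N a i k * ε N (t - (a : ℤ)) ω k := by
    funext ω; exact Yc_eq_sum N a t i ω
  rw [this]
  exact Finset.measurable_sum _ fun k _ => (eps_meas hmeas N _ k).const_mul _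

lemma eps_memL2 (hmeas : ∀ N t, Measurable (ε N t))
    (hlaw : ∀ N t i, Measure.map (fun ω => ε N t ω i) μ = ν)
    (hmom2 : MemLp id (2 : ℝ≥0∞) ν) (N t i) :
    MemLp (fun ω => ε N t ω i) 2 μ :=
  map_memL2 (eps_meas hmeas N t i) (hlaw N t i) hmom2

lemma Yc_memL2 (hmeas : ∀ N t, Measurable (ε N t))
    (hlaw : ∀ N t i, Measure.map (fun ω => ε N t ω i) μ = ν)
    (hmom2 : MemLp id (2 : ℝ≥0∞) ν) (N a t i) :
    MemLp (Yc (Ω := Ω) ε B N a t i) 2 μ := by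
  have : Yc (Ω := Ω) ε B N a t i
      = fun ω => ∑ k : Fin N, B N a i k * ε N (t - (a : ℤ)) ω k := by
    funext ω; exact Yc_eq_sum N a t i ω
  rw [this]
  exact memLp_finset_sum _ fun k _ => (eps_memL2 hmeas hlaw hmom2 N _ k).const_mul _

/-- cross moments of the noise coordinates -/
lemma eps_cross (hmeas : ∀ N t, Measurable (ε N t))
    (hindep : ∀ N : ℕ, iIndepFun
      (fun p : ℤ × Fin N => fun ω => ε N p.1 ω p.2) μ)
    (hlaw : ∀ N t i, Measure.map (fun ω => ε N t ω i) μ = ν)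
    (hmean : ∫ x, x ∂ν = 0) (hmom2 : MemLp id (2 : ℝ≥0∞) ν)
    (N : ℕ) (τ τ' : ℤ) (k l : Fin N) :
    ∫ ω, ε N τ ω k * ε N τ' ω l ∂μ
      = if (τ, k) = (τ', l) then ∫ x, x ^ 2 ∂ν else 0 := by
  by_cases h : (τ, k) = (τ', l)
  · obtain ⟨h1, h2⟩ := Prod.mk.injEq .. ▸ h
    subst h1; subst h2
    rw [if_pos rfl, ← map_sq (eps_meas hmeas N τ k) (hlaw N τ k)]
    congr 1; funext ω; ring
  · rw [if_neg h]
    have hind : IndepFun (fun ω => ε N τ ω k) (fun ω => ε N τ' ω l) μ :=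
      (hindep N).indepFun (i := (τ, k)) (j := (τ', l)) h
    have := hind.integral_mul_eq_mul_integral
      ((eps_meas hmeas N τ k).aestronglyMeasurable)
      ((eps_meas hmeas N τ' l).aestronglyMeasurable)
    rw [map_mean (eps_meas hmeas N τ k) (hlaw N τ k) hmean, zero_mul] at this
    exact this


/-- covariance of the MA terms -/
lemma Yc_cov (hmeas : ∀ N t, Measurable (ε N t))
    (hindep : ∀ N : ℕ, iIndepFun
      (fun p : ℤ × Fin N => fun ω => ε N p.1 ω p.2) μ)
    (hlaw : ∀ N t i, Measure.map (fun ω => ε N t ω i) μ = ν)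
    (hmean : ∫ x, x ∂ν = 0) (hmom2 : MemLp id (2 : ℝ≥0∞) ν)
    (N : ℕ) (a b : ℕ) (t s : ℤ) (i j : Fin N) :
    ∫ ω, Yc (Ω := Ω) ε B N a t i ω * Yc (Ω := Ω) ε B N b s j ω ∂μ
      = if (t - (a : ℤ) = s - (b : ℤ)) then
          (∫ x, x ^ 2 ∂ν) * ∑ k : Fin N, B N a i k * B N b j k else 0 := by
  have hεL2 : ∀ (τ : ℤ) (k : Fin N), MemLp (fun ω => ε N τ ω k) 2 μ :=
    fun τ k => eps_memL2 hmeas hlaw hmom2 N τ k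
  -- expand the first factor
  have step1 : ∫ ω, Yc (Ω := Ω) ε B N a t i ω * Yc (Ω := Ω) ε B N b s j ω ∂μ
      = ∑ k : Fin N, B N a i k *
          ∫ ω, ε N (t - (a : ℤ)) ω k * Yc (Ω := Ω) ε B N b s j ω ∂μ := by
    rw [show (fun ω => Yc (Ω := Ω) ε B N a t i ω * Yc (Ω := Ω) ε B N b s j ω)
        = fun ω => ∑ k : Fin N,
            B N a i k * (ε N (t - (a : ℤ)) ω k * Yc (Ω := Ω) ε B N b s j ω) from
      funext fun ω => by rw [Yc_eq_sum, Finset.sum_mul]; congr 1; funext k; ring]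
    rw [integral_finset_sum]
    · exact Finset.sum_congr rfl fun k _ => integral_const_mul _ _
    · intro k _
      exact (integrable_mul_of_memL2 (hεL2 _ k) (Yc_memL2 hmeas hlaw hmom2 N b s j)).const_mul _
  -- expand the second factor
  have step2 : ∀ k : Fin N,
      ∫ ω, ε N (t - (a : ℤ)) ω k * Yc (Ω := Ω) ε B N b s j ω ∂μ
        = ∑ l : Fin N, B N b j l * ∫ ω, ε N (t - (a : ℤ)) ω k * ε N (s - (b : ℤ)) ω l ∂μ := by
    intro k
    rw [show (fun ω => ε N (t - (a : ℤ)) ω k * Yc (Ω := Ω) ε B N b s j ω)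
        = fun ω => ∑ l : Fin N,
            B N b j l * (ε N (t - (a : ℤ)) ω k * ε N (s - (b : ℤ)) ω l) from
      funext fun ω => by rw [Yc_eq_sum, Finset.mul_sum]; congr 1; funext l; ring]
    rw [integral_finset_sum]
    · exact Finset.sum_congr rfl fun l _ => integral_const_mul _ _
    · intro l _
      exact (integrable_mul_of_memL2 (hεL2 _ k) (hεL2 _ l)).const_mul _
  simp only [step1, step2,
    eps_cross hmeas hindep hlaw hmean hmom2 N (t - (a : ℤ)) (s - (b : ℤ))]
  by_cases hts : t - (a : ℤ) = s - (b : ℤ)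
  · rw [if_pos hts]
    have : ∀ k l : Fin N, ((t - (a : ℤ), k) = (s - (b : ℤ), l))
        ↔ k = l := by
      intro k l
      simp [Prod.ext_iff, hts]
    simp only [this]
    rw [Finset.mul_sum]
    refine Finset.sum_congr rfl fun k _ => ?_
    rw [Finset.sum_eq_single k]
    · simp; ring
    · intro l _ hl; simp [Ne.symm hl]
    · simp
  · rw [if_neg hts]
    have : ∀ k l : Fin N, ((t - (a : ℤ), k) = (s - (b : ℤ), l)) ↔ False := by
      intro k l; simp [Prod.ext_iff, hts]
    simp only [this]
    simp


lemma cov_bound (hmeas : ∀ N t, Measurable (ε N t))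
    (hindep : ∀ N : ℕ, iIndepFun
      (fun p : ℤ × Fin N => fun ω => ε N p.1 ω p.2) μ)
    (hlaw : ∀ N t i, Measure.map (fun ω => ε N t ω i) μ = ν)
    (hmean : ∫ x, x ∂ν = 0) (hmom2 : MemLp id (2 : ℝ≥0∞) ν)
    {C₀ ρ : ℝ} (hC₀ : 0 < C₀) (hρ0 : 0 < ρ) (hρ1 : ρ < 1)
    (hB_col : ∀ N j, ∀ l : Fin N, ∑ k : Fin N, |B N j k l| ≤ C₀ * ρ ^ j)
    (hsum : ∀ N t i, ∀ᵐ ω ∂μ,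
      Summable (fun j : ℕ => (B N j).mulVec (ε N (t - (j : ℤ)) ω) i))
    (N : ℕ) (t s : ℤ) (i j : Fin N) :
    |∫ ω, uCoord (Ω := Ω) ε B N t ω i * uCoord (Ω := Ω) ε B N s ω j ∂μ|
      ≤ (∫ x, x ^ 2 ∂ν) *
        ∑' p : ℕ × ℕ, (if ((p.1 : ℤ) - p.2 = t - s) then
          ∑ k : Fin N, |B N p.1 i k| * |B N p.2 j k| else 0) := by
  classical
  set σ2 : ℝ := ∫ x, x ^ 2 ∂ν with hσ2def
  have hσ2 : 0 ≤ σ2 := integral_nonneg fun x => sq_nonneg x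
  -- entrywise bound
  have hentry : ∀ (a : ℕ) (i' k : Fin N), |B N a i' k| ≤ C₀ * ρ ^ a := by
    intro a i' k
    refine le_trans ?_ (hB_col N a k)
    exact Finset.single_le_sum (f := fun i'' => |B N a i'' k|)
      (fun _ _ => abs_nonneg _) (Finset.mem_univ i')
  -- summability of the weight function
  set w : ℕ × ℕ → ℝ := fun p => if ((p.1 : ℤ) - p.2 = t - s) then
    ∑ k : Fin N, |B N p.1 i k| * |B N p.2 j k| else 0 with hwdef
  have hw_nonneg : ∀ p, 0 ≤ w p := by
    intro p; rw [hwdef]; dsimp only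
    split
    · exact Finset.sum_nonneg fun k _ => mul_nonneg (abs_nonneg _) (abs_nonneg _)
    · exact le_refl 0
  have hw_le : ∀ p : ℕ × ℕ, w p ≤ (N * C₀ ^ 2) * (ρ ^ p.1 * ρ ^ p.2) := by
    intro p; rw [hwdef]; dsimp only
    split
    · calc ∑ k : Fin N, |B N p.1 i k| * |B N p.2 j k|
          ≤ ∑ _k : Fin N, (C₀ * ρ ^ p.1) * (C₀ * ρ ^ p.2) := by
            refine Finset.sum_le_sum fun k _ => ?_
            exact mul_le_mul (hentry _ _ _) (hentry _ _ _) (abs_nonneg _)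
              (by positivity)
        _ = (N * C₀ ^ 2) * (ρ ^ p.1 * ρ ^ p.2) := by
            rw [Finset.sum_const, Finset.card_univ, Fintype.card_fin]; ring
    · positivity
  have hWsummable : Summable (fun p : ℕ × ℕ => (N * C₀ ^ 2) * (ρ ^ p.1 * ρ ^ p.2)) :=
    (((summable_geometric_of_lt_one hρ0.le hρ1).mul_of_nonneg
      (summable_geometric_of_lt_one hρ0.le hρ1)
      (fun _ => by positivity) (fun _ => by positivity))).mul_left _
  have hwsummable : Summable w := hWsummable.of_nonneg_of_le hw_nonneg hw_le
  -- a.s. summability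
  have hsum' : ∀ (t' : ℤ) (i' : Fin N), ∀ᵐ ω ∂μ,
      Summable fun a : ℕ => Yc (Ω := Ω) ε B N a t' i' ω := fun t' i' => hsum N t' i'
  -- the dominating function
  set gf : ℤ → Fin N → Ω → ℝ := fun t' i' ω => ∑' a : ℕ, |Yc (Ω := Ω) ε B N a t' i' ω|
    with hgfdef
  have hgf_tendsto : ∀ (t' : ℤ) (i' : Fin N), ∀ᵐ ω ∂μ,
      Tendsto (fun M => ∑ a ∈ Finset.range M, |Yc (Ω := Ω) ε B N a t' i' ω|)
        atTop (𝓝 (gf t' i' ω)) := by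
    intro t' i'
    filter_upwards [hsum' t' i'] with ω hω
    exact hω.abs.hasSum.tendsto_sum_nat
  have habs_meas : ∀ (M : ℕ) (t' : ℤ) (i' : Fin N),
      Measurable fun ω => ∑ a ∈ Finset.range M, |Yc (Ω := Ω) ε B N a t' i' ω| :=
    fun M t' i' => Finset.measurable_sum _ fun a _ => (Yc_meas hmeas N a t' i').abs
  have hgf_aesm : ∀ (t' : ℤ) (i' : Fin N), AEStronglyMeasurable (gf t' i') μ := by
    intro t' i'
    exact aestronglyMeasurable_of_tendsto_ae atTop
      (fun M => (habs_meas M t' i').aestronglyMeasurable) (hgf_tendsto t' i')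
  -- L² bound on gf
  set κ : ℝ≥0∞ := eLpNorm id 2 ν with hκdef
  have hκ : κ < ⊤ := hmom2.2
  have hYnorm : ∀ (a : ℕ) (t' : ℤ) (i' : Fin N),
      eLpNorm (Yc (Ω := Ω) ε B N a t' i') 2 μ
        ≤ (N : ℝ≥0∞) * ENNReal.ofReal (C₀ * ρ ^ a) * κ := by
    intro a t' i'
    have hrw : Yc (Ω := Ω) ε B N a t' i'
        = ∑ k : Fin N, (B N a i' k) • (fun ω => ε N (t' - (a : ℤ)) ω k) := by
      funext ω
      rw [Yc_eq_sum]
      simp [Finset.sum_apply]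
    rw [hrw]
    calc eLpNorm (∑ k : Fin N, (B N a i' k) • (fun ω => ε N (t' - (a : ℤ)) ω k)) 2 μ
        ≤ ∑ k : Fin N, eLpNorm ((B N a i' k) • (fun ω => ε N (t' - (a : ℤ)) ω k)) 2 μ :=
          eLpNorm_sum_le (fun k _ =>
            ((eps_meas hmeas N _ k).aestronglyMeasurable).const_smul _) one_le_two
      _ = ∑ k : Fin N, (‖B N a i' k‖₊ : ℝ≥0∞) * eLpNorm (fun ω => ε N (t' - (a : ℤ)) ω k) 2 μ := by
          refine Finset.sum_congr rfl fun k _ => ?_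
          rw [eLpNorm_const_smul, enorm_eq_nnnorm]
      _ ≤ ∑ _k : Fin N, ENNReal.ofReal (C₀ * ρ ^ a) * κ := by
          refine Finset.sum_le_sum fun k _ => ?_
          rw [map_eLpNorm (eps_meas hmeas N _ k) (hlaw N _ k)]
          refine mul_le_mul_left ?_ κ
          rw [← enorm_eq_nnnorm, ← ofReal_norm, Real.norm_eq_abs]
          exact ENNReal.ofReal_le_ofReal (hentry a i' k)
      _ = (N : ℝ≥0∞) * ENNReal.ofReal (C₀ * ρ ^ a) * κ := by
          rw [Finset.sum_const, Finset.card_univ, Fintype.card_fin, nsmul_eq_mul, mul_assoc]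
  have hGMnorm : ∀ (M : ℕ) (t' : ℤ) (i' : Fin N),
      eLpNorm (fun ω => ∑ a ∈ Finset.range M, |Yc (Ω := Ω) ε B N a t' i' ω|) 2 μ
        ≤ (N : ℝ≥0∞) * ENNReal.ofReal (C₀ * (1 - ρ)⁻¹) * κ := by
    intro M t' i'
    have hrw : (fun ω => ∑ a ∈ Finset.range M, |Yc (Ω := Ω) ε B N a t' i' ω|)
        = ∑ a ∈ Finset.range M, (fun ω => |Yc (Ω := Ω) ε B N a t' i' ω|) := by
      funext ω; simp [Finset.sum_apply]
    rw [hrw]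
    calc eLpNorm (∑ a ∈ Finset.range M, (fun ω => |Yc (Ω := Ω) ε B N a t' i' ω|)) 2 μ
        ≤ ∑ a ∈ Finset.range M, eLpNorm (fun ω => |Yc (Ω := Ω) ε B N a t' i' ω|) 2 μ :=
          eLpNorm_sum_le (fun a _ => (Yc_meas hmeas N a t' i').abs.aestronglyMeasurable)
            one_le_two
      _ = ∑ a ∈ Finset.range M, eLpNorm (Yc (Ω := Ω) ε B N a t' i') 2 μ := by
          refine Finset.sum_congr rfl fun a _ => ?_
          rw [show (fun ω => |Yc (Ω := Ω) ε B N a t' i' ω|)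
              = fun ω => ‖Yc (Ω := Ω) ε B N a t' i' ω‖ from funext fun ω =>
                (Real.norm_eq_abs _).symm]
          exact eLpNorm_norm _
      _ ≤ ∑ a ∈ Finset.range M, (N : ℝ≥0∞) * ENNReal.ofReal (C₀ * ρ ^ a) * κ :=
          Finset.sum_le_sum fun a _ => hYnorm a t' i'
      _ = (N : ℝ≥0∞) * ENNReal.ofReal (∑ a ∈ Finset.range M, C₀ * ρ ^ a) * κ := by
          rw [ENNReal.ofReal_sum_of_nonneg (fun a _ => by positivity),
            Finset.mul_sum, Finset.sum_mul]
      _ ≤ (N : ℝ≥0∞) * ENNReal.ofReal (C₀ * (1 - ρ)⁻¹) * κ := by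
          refine mul_le_mul_left (mul_le_mul_right (ENNReal.ofReal_le_ofReal ?_) _) κ
          rw [← Finset.mul_sum]
          refine mul_le_mul_of_nonneg_left ?_ hC₀.le
          calc ∑ a ∈ Finset.range M, ρ ^ a ≤ ∑' a : ℕ, ρ ^ a :=
                Summable.sum_le_tsum _ (fun a _ => by positivity)
                  (summable_geometric_of_lt_one hρ0.le hρ1)
            _ = (1 - ρ)⁻¹ := tsum_geometric_of_lt_one hρ0.le hρ1
  have hgfL2 : ∀ (t' : ℤ) (i' : Fin N), MemLp (gf t' i') 2 μ := by
    intro t' i'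
    refine ⟨hgf_aesm t' i', ?_⟩
    have h1 := Lp.eLpNorm_lim_le_liminf_eLpNorm (p := 2) (μ := μ)
      (fun M => (habs_meas M t' i').aestronglyMeasurable) (gf t' i') (hgf_tendsto t' i')
    have h2 : liminf (fun M => eLpNorm
        (fun ω => ∑ a ∈ Finset.range M, |Yc (Ω := Ω) ε B N a t' i' ω|) 2 μ) atTop
        ≤ (N : ℝ≥0∞) * ENNReal.ofReal (C₀ * (1 - ρ)⁻¹) * κ :=
      le_trans (Filter.liminf_le_liminf (Filter.Eventually.of_forall
        fun M => hGMnorm M t' i')) (le_of_eq (Filter.liminf_const _))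
    have h3 : (N : ℝ≥0∞) * ENNReal.ofReal (C₀ * (1 - ρ)⁻¹) * κ < ⊤ :=
      ENNReal.mul_lt_top (ENNReal.mul_lt_top (ENNReal.natCast_lt_top N)
        ENNReal.ofReal_lt_top) hκ
    exact lt_of_le_of_lt (h1.trans h2) h3
  -- nonnegativity of gf
  have hgf_nonneg : ∀ (t' : ℤ) (i' : Fin N) (ω : Ω), 0 ≤ gf t' i' ω :=
    fun t' i' ω => tsum_nonneg fun a => abs_nonneg _
  -- partial-sum bounds
  have hS_le_gf : ∀ (t' : ℤ) (i' : Fin N), ∀ᵐ ω ∂μ, ∀ M : ℕ,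
      |∑ a ∈ Finset.range M, Yc (Ω := Ω) ε B N a t' i' ω| ≤ gf t' i' ω := by
    intro t' i'
    filter_upwards [hsum' t' i'] with ω hω M
    calc |∑ a ∈ Finset.range M, Yc (Ω := Ω) ε B N a t' i' ω|
        ≤ ∑ a ∈ Finset.range M, |Yc (Ω := Ω) ε B N a t' i' ω| :=
          Finset.abs_sum_le_sum_abs _ _
      _ ≤ gf t' i' ω := Summable.sum_le_tsum _ (fun a _ => abs_nonneg _) hω.abs
  -- dominated convergence
  have hDCT : Tendsto
      (fun M => ∫ ω, (∑ a ∈ Finset.range M, Yc (Ω := Ω) ε B N a t i ω) *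
        (∑ b ∈ Finset.range M, Yc (Ω := Ω) ε B N b s j ω) ∂μ) atTop
      (𝓝 (∫ ω, uCoord (Ω := Ω) ε B N t ω i * uCoord (Ω := Ω) ε B N s ω j ∂μ)) := by
    refine tendsto_integral_of_dominated_convergence
      (fun ω => gf t i ω * gf s j ω)
      (fun M => ((Finset.measurable_sum _ fun a _ => Yc_meas hmeas N a t i).mul
        (Finset.measurable_sum _ fun b _ => Yc_meas hmeas N b s j)).aestronglyMeasurable)
      (integrable_mul_of_memL2 (hgfL2 t i) (hgfL2 s j)) ?_ ?_
    · intro M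
      filter_upwards [hS_le_gf t i, hS_le_gf s j] with ω h1 h2
      rw [Real.norm_eq_abs, abs_mul]
      exact mul_le_mul (h1 M) (h2 M) (abs_nonneg _) (hgf_nonneg t i ω)
    · filter_upwards [hsum' t i, hsum' s j] with ω h1 h2
      exact (h1.hasSum.tendsto_sum_nat).mul (h2.hasSum.tendsto_sum_nat)
  -- value of the integral of partial sums
  have hQ : ∀ M : ℕ,
      ∫ ω, (∑ a ∈ Finset.range M, Yc (Ω := Ω) ε B N a t i ω) *
        (∑ b ∈ Finset.range M, Yc (Ω := Ω) ε B N b s j ω) ∂μ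
      = ∑ a ∈ Finset.range M, ∑ b ∈ Finset.range M,
          (if (t - (a : ℤ) = s - (b : ℤ)) then
            σ2 * ∑ k : Fin N, B N a i k * B N b j k else 0) := by
    intro M
    have hrw : (fun ω => (∑ a ∈ Finset.range M, Yc (Ω := Ω) ε B N a t i ω) *
        (∑ b ∈ Finset.range M, Yc (Ω := Ω) ε B N b s j ω))
        = fun ω => ∑ a ∈ Finset.range M, ∑ b ∈ Finset.range M,
            Yc (Ω := Ω) ε B N a t i ω * Yc (Ω := Ω) ε B N b s j ω := by
      funext ω; rw [Finset.sum_mul_sum]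
    rw [hrw, integral_finset_sum]
    · refine Finset.sum_congr rfl fun a _ => ?_
      rw [integral_finset_sum]
      · exact Finset.sum_congr rfl fun b _ =>
          Yc_cov hmeas hindep hlaw hmean hmom2 N a b t s i j
      · intro b _
        exact integrable_mul_of_memL2 (Yc_memL2 hmeas hlaw hmom2 N a t i)
          (Yc_memL2 hmeas hlaw hmom2 N b s j)
    · intro a _
      refine integrable_finset_sum _ fun b _ => ?_
      exact integrable_mul_of_memL2 (Yc_memL2 hmeas hlaw hmom2 N a t i)
        (Yc_memL2 hmeas hlaw hmom2 N b s j)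
  -- bound on the partial covariance sums
  have hQbound : ∀ M : ℕ,
      |∑ a ∈ Finset.range M, ∑ b ∈ Finset.range M,
          (if (t - (a : ℤ) = s - (b : ℤ)) then
            σ2 * ∑ k : Fin N, B N a i k * B N b j k else 0)|
        ≤ σ2 * ∑' p, w p := by
    intro M
    have hterm : ∀ a b : ℕ,
        |if (t - (a : ℤ) = s - (b : ℤ)) then
            σ2 * ∑ k : Fin N, B N a i k * B N b j k else 0|
          ≤ σ2 * w (a, b) := by
      intro a b
      rw [hwdef]; dsimp only
      have hcond : (t - (a : ℤ) = s - (b : ℤ)) ↔ ((a : ℤ) - b = t - s) := by omega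
      by_cases h : t - (a : ℤ) = s - (b : ℤ)
      · rw [if_pos h, if_pos (hcond.mp h), abs_mul, abs_of_nonneg hσ2]
        refine mul_le_mul_of_nonneg_left ?_ hσ2
        calc |∑ k : Fin N, B N a i k * B N b j k|
            ≤ ∑ k : Fin N, |B N a i k * B N b j k| := Finset.abs_sum_le_sum_abs _ _
          _ = ∑ k : Fin N, |B N a i k| * |B N b j k| := by
              refine Finset.sum_congr rfl fun k _ => abs_mul _ _
      · rw [if_neg h, if_neg (fun hc => h (hcond.mpr hc)), abs_zero, mul_zero]
    calc |∑ a ∈ Finset.range M, ∑ b ∈ Finset.range M, _|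
        ≤ ∑ a ∈ Finset.range M, ∑ b ∈ Finset.range M,
            |if (t - (a : ℤ) = s - (b : ℤ)) then
              σ2 * ∑ k : Fin N, B N a i k * B N b j k else 0| :=
          le_trans (Finset.abs_sum_le_sum_abs _ _)
            (Finset.sum_le_sum fun a _ => Finset.abs_sum_le_sum_abs _ _)
      _ ≤ ∑ a ∈ Finset.range M, ∑ b ∈ Finset.range M, σ2 * w (a, b) :=
          Finset.sum_le_sum fun a _ => Finset.sum_le_sum fun b _ => hterm a b
      _ = σ2 * ∑ p ∈ Finset.range M ×ˢ Finset.range M, w p := by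
          rw [Finset.sum_product]
          rw [Finset.mul_sum]
          exact Finset.sum_congr rfl fun a _ => by rw [Finset.mul_sum]
      _ ≤ σ2 * ∑' p, w p := by
          refine mul_le_mul_of_nonneg_left ?_ hσ2
          exact Summable.sum_le_tsum _ (fun p _ => hw_nonneg p) hwsummable
  -- conclude
  have habs : Tendsto (fun M => |∑ a ∈ Finset.range M, ∑ b ∈ Finset.range M,
      (if (t - (a : ℤ) = s - (b : ℤ)) then
        σ2 * ∑ k : Fin N, B N a i k * B N b j k else 0)|) atTop
      (𝓝 |∫ ω, uCoord (Ω := Ω) ε B N t ω i * uCoord (Ω := Ω) ε B N s ω j ∂μ|) := by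
    have := hDCT
    simp_rw [hQ] at this
    exact this.abs
  exact le_of_tendsto habs (Filter.Eventually.of_forall hQbound)


/-- Example 1, part 2, Bai's Assumption C(ii): under the column-sum decay
`|B_j|₁ ≤ C₀ρ^j` and `E[ε₁₁²] < ∞`,
`(NT)⁻¹ ∑_{i,j=1}^N ∑_{t,s=1}^T |E[u_{it} u_{js}]| ≤ C` uniformly in `N, T`. -/
theorem statement17 {Ω : Type*} [MeasurableSpace Ω] (μ : Measure Ω) [IsProbabilityMeasure μ]
    (ν : Measure ℝ) [IsProbabilityMeasure ν]
    (ε : (N : ℕ) → ℤ → Ω → Fin N → ℝ)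
    (B : (N : ℕ) → ℕ → Matrix (Fin N) (Fin N) ℝ)
    (C₀ ρ : ℝ) (hC₀ : 0 < C₀) (hρ0 : 0 < ρ) (hρ1 : ρ < 1)
    (hmeas : ∀ N t, Measurable (ε N t))
    (hindep : ∀ N : ℕ, iIndepFun
      (fun p : ℤ × Fin N => fun ω => ε N p.1 ω p.2) μ)
    (hlaw : ∀ N t i, Measure.map (fun ω => ε N t ω i) μ = ν)
    (hmean : ∫ x, x ∂ν = 0)
    (hmom2 : MemLp id (2 : ℝ≥0∞) ν)
    (hB_col : ∀ N j, ∀ l : Fin N, ∑ k : Fin N, |B N j k l| ≤ C₀ * ρ ^ j)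
    (hsum : ∀ N t i, ∀ᵐ ω ∂μ,
      Summable (fun j : ℕ => (B N j).mulVec (ε N (t - (j : ℤ)) ω) i)) :
    ∃ C : ℝ, 0 < C ∧ ∀ N T : ℕ, 1 ≤ N → 1 ≤ T →
      (1 / ((N : ℝ) * T)) *
        ∑ i : Fin N, ∑ j : Fin N,
          ∑ t ∈ Finset.Icc (1 : ℤ) (T : ℤ), ∑ s ∈ Finset.Icc (1 : ℤ) (T : ℤ),
            |∫ ω, uCoord ε B N t ω i * uCoord ε B N s ω j ∂μ| ≤ C := by
  classical
  set σ2 : ℝ := ∫ x, x ^ 2 ∂ν with hσ2def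
  have hσ2 : 0 ≤ σ2 := integral_nonneg fun x => sq_nonneg x
  have hρ2 : ρ ^ 2 < 1 := by nlinarith
  have hgeo : Summable (fun n : ℕ => ρ ^ n) := summable_geometric_of_lt_one hρ0.le hρ1
  set D : ℝ := σ2 * C₀ ^ 2 * (1 - ρ ^ 2)⁻¹ * (2 * (1 - ρ)⁻¹) with hDdef
  have hD : 0 ≤ D := by
    have h1 : (0:ℝ) ≤ (1 - ρ ^ 2)⁻¹ := by
      have : (0:ℝ) ≤ 1 - ρ ^ 2 := by nlinarith
      positivity
    have h2 : (0:ℝ) ≤ (1 - ρ)⁻¹ := by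
      have : (0:ℝ) ≤ 1 - ρ := by linarith
      positivity
    rw [hDdef]
    have h3 : (0:ℝ) ≤ σ2 * C₀ ^ 2 := by positivity
    have h4 : (0:ℝ) ≤ σ2 * C₀ ^ 2 * (1 - ρ ^ 2)⁻¹ := mul_nonneg h3 h1
    exact mul_nonneg h4 (by linarith)
  refine ⟨D + 1, by linarith, fun N T hN hT => ?_⟩
  have hNT : (0 : ℝ) < (N : ℝ) * T := by
    have : (1:ℝ) ≤ (N:ℝ) := by exact_mod_cast hN
    have : (1:ℝ) ≤ (T:ℝ) := by exact_mod_cast hT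
    positivity
  -- per (t,s) bound on the double cross-sectional sum
  have hts : ∀ t s : ℤ,
      ∑ i : Fin N, ∑ j : Fin N, |∫ ω, uCoord ε B N t ω i * uCoord ε B N s ω j ∂μ|
        ≤ σ2 * ((N : ℝ) * C₀ ^ 2) * (1 - ρ ^ 2)⁻¹ * ρ ^ (t - s).natAbs := by
    intro t s
    set w : Fin N → Fin N → ℕ × ℕ → ℝ := fun i j p =>
      if ((p.1 : ℤ) - p.2 = t - s) then
        ∑ k : Fin N, |B N p.1 i k| * |B N p.2 j k| else 0 with hwdef
    have hentry : ∀ (a : ℕ) (i' k : Fin N), |B N a i' k| ≤ C₀ * ρ ^ a := by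
      intro a i' k
      refine le_trans ?_ (hB_col N a k)
      exact Finset.single_le_sum (f := fun i'' => |B N a i'' k|)
        (fun _ _ => abs_nonneg _) (Finset.mem_univ i')
    have hw_nonneg : ∀ i j p, 0 ≤ w i j p := by
      intro i j p; rw [hwdef]; dsimp only
      split
      · exact Finset.sum_nonneg fun k _ => mul_nonneg (abs_nonneg _) (abs_nonneg _)
      · exact le_refl 0
    have hw_le : ∀ i j (p : ℕ × ℕ), w i j p ≤ ((N:ℝ) * C₀ ^ 2) * (ρ ^ p.1 * ρ ^ p.2) := by
      intro i j p; rw [hwdef]; dsimp only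
      split
      · calc ∑ k : Fin N, |B N p.1 i k| * |B N p.2 j k|
            ≤ ∑ _k : Fin N, (C₀ * ρ ^ p.1) * (C₀ * ρ ^ p.2) :=
              Finset.sum_le_sum fun k _ => mul_le_mul (hentry _ _ _) (hentry _ _ _)
                (abs_nonneg _) (by positivity)
          _ = ((N:ℝ) * C₀ ^ 2) * (ρ ^ p.1 * ρ ^ p.2) := by
              rw [Finset.sum_const, Finset.card_univ, Fintype.card_fin]; ring
      · positivity
    have hWsummable : Summable (fun p : ℕ × ℕ => ((N:ℝ) * C₀ ^ 2) * (ρ ^ p.1 * ρ ^ p.2)) :=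
      ((hgeo.mul_of_nonneg hgeo (fun _ => by positivity) (fun _ => by positivity))).mul_left _
    have hwsummable : ∀ i j, Summable (w i j) := fun i j =>
      hWsummable.of_nonneg_of_le (hw_nonneg i j) (hw_le i j)
    have hIsummable : Summable (fun p : ℕ × ℕ =>
        if ((p.1 : ℤ) - p.2 = t - s) then ρ ^ (p.1 + p.2) else 0) := by
      refine (hgeo.mul_of_nonneg hgeo (fun _ => by positivity)
        (fun _ => by positivity)).of_nonneg_of_le (fun p => ?_) (fun p => ?_)
      · split
        · positivity
        · exact le_refl 0
      · split
        · rw [pow_add]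
        · positivity
    calc ∑ i : Fin N, ∑ j : Fin N, |∫ ω, uCoord ε B N t ω i * uCoord ε B N s ω j ∂μ|
        ≤ ∑ i : Fin N, ∑ j : Fin N, σ2 * ∑' p, w i j p := by
          refine Finset.sum_le_sum fun i _ => Finset.sum_le_sum fun j _ => ?_
          exact cov_bound hmeas hindep hlaw hmean hmom2 hC₀ hρ0 hρ1 hB_col hsum N t s i j
      _ = σ2 * ∑ i : Fin N, ∑ j : Fin N, ∑' p, w i j p := by
          rw [Finset.mul_sum]
          exact Finset.sum_congr rfl fun i _ => by rw [Finset.mul_sum]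
      _ = σ2 * ∑' p, ∑ i : Fin N, ∑ j : Fin N, w i j p := by
          congr 1
          calc ∑ i : Fin N, ∑ j : Fin N, ∑' p, w i j p
              = ∑ i : Fin N, ∑' p, ∑ j : Fin N, w i j p :=
                Finset.sum_congr rfl fun i _ =>
                  (Summable.tsum_finsetSum (fun j _ => hwsummable i j)).symm
            _ = ∑' p, ∑ i : Fin N, ∑ j : Fin N, w i j p :=
                (Summable.tsum_finsetSum (fun i _ => summable_sum (fun j _ => hwsummable i j))).symm
      _ ≤ σ2 * ∑' p : ℕ × ℕ, ((N:ℝ) * C₀ ^ 2) *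
            (if ((p.1 : ℤ) - p.2 = t - s) then ρ ^ (p.1 + p.2) else 0) := by
          refine mul_le_mul_of_nonneg_left ?_ hσ2
          refine Summable.tsum_le_tsum (fun p => ?_)
            (summable_sum (fun i _ => summable_sum (fun j _ => hwsummable i j)))
            (hIsummable.mul_left _)
          by_cases hc : ((p.1 : ℤ) - p.2 = t - s)
          · have hL : ∀ i j : Fin N, w i j p
                = ∑ k : Fin N, |B N p.1 i k| * |B N p.2 j k| := fun i j => if_pos hc
            simp only [hL]
            rw [if_pos hc, pow_add]
            calc ∑ i : Fin N, ∑ j : Fin N, ∑ k : Fin N, |B N p.1 i k| * |B N p.2 j k|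
                = ∑ i : Fin N, ∑ k : Fin N, ∑ j : Fin N, |B N p.1 i k| * |B N p.2 j k| :=
                  Finset.sum_congr rfl fun i _ => Finset.sum_comm
              _ = ∑ k : Fin N, ∑ i : Fin N, ∑ j : Fin N, |B N p.1 i k| * |B N p.2 j k| :=
                  Finset.sum_comm
              _ = ∑ k : Fin N, (∑ i : Fin N, |B N p.1 i k|) * (∑ j : Fin N, |B N p.2 j k|) := by
                  refine Finset.sum_congr rfl fun k _ => ?_
                  rw [Finset.sum_mul]
                  exact Finset.sum_congr rfl fun i _ => (Finset.mul_sum _ _ _).symm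
              _ ≤ ∑ _k : Fin N, (C₀ * ρ ^ p.1) * (C₀ * ρ ^ p.2) := by
                  refine Finset.sum_le_sum fun k _ => ?_
                  refine mul_le_mul (hB_col N p.1 k) (hB_col N p.2 k)
                    (Finset.sum_nonneg fun j _ => abs_nonneg _) (by positivity)
              _ = ((N:ℝ) * C₀ ^ 2) * (ρ ^ p.1 * ρ ^ p.2) := by
                  rw [Finset.sum_const, Finset.card_univ, Fintype.card_fin]; ring
          · have hL : ∀ i j : Fin N, w i j p = 0 := fun i j => if_neg hc
            simp only [hL]
            rw [if_neg hc]
            simp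
      _ = σ2 * (((N:ℝ) * C₀ ^ 2) *
            ∑' p : ℕ × ℕ, (if ((p.1 : ℤ) - p.2 = t - s) then ρ ^ (p.1 + p.2) else 0)) := by
          rw [tsum_mul_left]
      _ ≤ σ2 * (((N:ℝ) * C₀ ^ 2) * (ρ ^ (t - s).natAbs * (1 - ρ ^ 2)⁻¹)) := by
          refine mul_le_mul_of_nonneg_left (mul_le_mul_of_nonneg_left ?_ (by positivity)) hσ2
          exact line_tsum_le hρ0.le hρ1 (t - s)
      _ = σ2 * ((N : ℝ) * C₀ ^ 2) * (1 - ρ ^ 2)⁻¹ * ρ ^ (t - s).natAbs := by ring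
  -- reorder the quadruple sum and finish
  have hreorder :
      ∑ i : Fin N, ∑ j : Fin N, ∑ t ∈ Finset.Icc (1 : ℤ) (T : ℤ), ∑ s ∈ Finset.Icc (1 : ℤ) (T : ℤ),
          |∫ ω, uCoord ε B N t ω i * uCoord ε B N s ω j ∂μ|
        = ∑ t ∈ Finset.Icc (1 : ℤ) (T : ℤ), ∑ s ∈ Finset.Icc (1 : ℤ) (T : ℤ),
            ∑ i : Fin N, ∑ j : Fin N,
              |∫ ω, uCoord ε B N t ω i * uCoord ε B N s ω j ∂μ| := by
    calc ∑ i : Fin N, ∑ j : Fin N, ∑ t ∈ Finset.Icc (1 : ℤ) (T : ℤ),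
            ∑ s ∈ Finset.Icc (1 : ℤ) (T : ℤ),
            |∫ ω, uCoord ε B N t ω i * uCoord ε B N s ω j ∂μ|
        = ∑ i : Fin N, ∑ t ∈ Finset.Icc (1 : ℤ) (T : ℤ), ∑ j : Fin N,
            ∑ s ∈ Finset.Icc (1 : ℤ) (T : ℤ),
            |∫ ω, uCoord ε B N t ω i * uCoord ε B N s ω j ∂μ| :=
          Finset.sum_congr rfl fun i _ => Finset.sum_comm
      _ = ∑ t ∈ Finset.Icc (1 : ℤ) (T : ℤ), ∑ i : Fin N, ∑ j : Fin N,
            ∑ s ∈ Finset.Icc (1 : ℤ) (T : ℤ),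
            |∫ ω, uCoord ε B N t ω i * uCoord ε B N s ω j ∂μ| := Finset.sum_comm
      _ = ∑ t ∈ Finset.Icc (1 : ℤ) (T : ℤ), ∑ i : Fin N,
            ∑ s ∈ Finset.Icc (1 : ℤ) (T : ℤ), ∑ j : Fin N,
            |∫ ω, uCoord ε B N t ω i * uCoord ε B N s ω j ∂μ| :=
          Finset.sum_congr rfl fun t _ => Finset.sum_congr rfl fun i _ => Finset.sum_comm
      _ = ∑ t ∈ Finset.Icc (1 : ℤ) (T : ℤ), ∑ s ∈ Finset.Icc (1 : ℤ) (T : ℤ),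
            ∑ i : Fin N, ∑ j : Fin N,
            |∫ ω, uCoord ε B N t ω i * uCoord ε B N s ω j ∂μ| :=
          Finset.sum_congr rfl fun t _ => Finset.sum_comm
  have htotal :
      ∑ t ∈ Finset.Icc (1 : ℤ) (T : ℤ), ∑ s ∈ Finset.Icc (1 : ℤ) (T : ℤ),
          ∑ i : Fin N, ∑ j : Fin N,
            |∫ ω, uCoord ε B N t ω i * uCoord ε B N s ω j ∂μ|
        ≤ (N : ℝ) * (T : ℝ) * D := by
    calc ∑ t ∈ Finset.Icc (1 : ℤ) (T : ℤ), ∑ s ∈ Finset.Icc (1 : ℤ) (T : ℤ),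
          ∑ i : Fin N, ∑ j : Fin N,
            |∫ ω, uCoord ε B N t ω i * uCoord ε B N s ω j ∂μ|
        ≤ ∑ t ∈ Finset.Icc (1 : ℤ) (T : ℤ), ∑ s ∈ Finset.Icc (1 : ℤ) (T : ℤ),
            σ2 * ((N : ℝ) * C₀ ^ 2) * (1 - ρ ^ 2)⁻¹ * ρ ^ (t - s).natAbs :=
          Finset.sum_le_sum fun t _ => Finset.sum_le_sum fun s _ => hts t s
      _ = σ2 * ((N : ℝ) * C₀ ^ 2) * (1 - ρ ^ 2)⁻¹ *
            ∑ t ∈ Finset.Icc (1 : ℤ) (T : ℤ), ∑ s ∈ Finset.Icc (1 : ℤ) (T : ℤ),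
              ρ ^ (t - s).natAbs := by
          rw [Finset.mul_sum]
          refine Finset.sum_congr rfl fun t _ => by rw [Finset.mul_sum]
      _ ≤ σ2 * ((N : ℝ) * C₀ ^ 2) * (1 - ρ ^ 2)⁻¹ * ((T : ℝ) * (2 * (1 - ρ)⁻¹)) := by
          have hcoef : (0:ℝ) ≤ σ2 * ((N : ℝ) * C₀ ^ 2) * (1 - ρ ^ 2)⁻¹ := by
            have h0 : (0:ℝ) ≤ σ2 * ((N : ℝ) * C₀ ^ 2) := by positivity
            have h1 : (0:ℝ) ≤ 1 - ρ ^ 2 := by nlinarith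
            have h2 : (0:ℝ) ≤ (1 - ρ ^ 2)⁻¹ := by positivity
            exact mul_nonneg h0 h2
          refine mul_le_mul_of_nonneg_left ?_ hcoef
          calc ∑ t ∈ Finset.Icc (1 : ℤ) (T : ℤ), ∑ s ∈ Finset.Icc (1 : ℤ) (T : ℤ),
                ρ ^ (t - s).natAbs
              ≤ ∑ _t ∈ Finset.Icc (1 : ℤ) (T : ℤ), 2 * (1 - ρ)⁻¹ :=
                Finset.sum_le_sum fun t _ => time_sum_le hρ0.le hρ1 T t
            _ = (T : ℝ) * (2 * (1 - ρ)⁻¹) := by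
                rw [Finset.sum_const, nsmul_eq_mul]
                congr 1
                rw [Int.card_Icc]
                simp
      _ = (N : ℝ) * (T : ℝ) * D := by rw [hDdef]; ring
  rw [hreorder] at *
  calc (1 / ((N : ℝ) * T)) * ∑ t ∈ Finset.Icc (1 : ℤ) (T : ℤ),
        ∑ s ∈ Finset.Icc (1 : ℤ) (T : ℤ), ∑ i : Fin N, ∑ j : Fin N,
          |∫ ω, uCoord ε B N t ω i * uCoord ε B N s ω j ∂μ|
      ≤ (1 / ((N : ℝ) * T)) * ((N : ℝ) * (T : ℝ) * D) := by
        exact mul_le_mul_of_nonneg_left htotal (by positivity)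
    _ = D := by field_simp
    _ ≤ D + 1 := by linarith

end PanelPaper
end
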